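/- arXiv:2406.05811 — 8 statements merged into one kernel-verified Lean document; each statement's English description precedes it below -/
import Mathlib

section
/- Let n ≥ 1 and let x = (X₁,…,Xₙ)ᵀ be a random vector whose entries X₁,…,Xₙ are i.i.d. complex random variables with 𝔼X₁ = 0, 𝔼|X₁|² = 1 and 𝔼|X₁|⁴ < ∞, and let M and N be non-random n×n complex matrices. Then 𝔼[(x*Mx − tr M)(x*Nx − tr N)] = (𝔼|X₁|⁴ − |𝔼X₁²|² − 2)·Σᵢ Mᵢᵢ Nᵢᵢ + |𝔼X₁²|²·tr(M Nᵀ) + tr(M N). -/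
open MeasureTheory ProbabilityTheory Matrix Finset

lemma aux_integral_mul {Ω : Type*} [MeasurableSpace Ω] {μ : Measure Ω} [IsProbabilityMeasure μ]
    {X Y : Ω → ℂ} (h : IndepFun X Y μ) (hX : AEMeasurable X μ) (hY : AEMeasurable Y μ) :
    ∫ ω, X ω * Y ω ∂μ = (∫ ω, X ω ∂μ) * ∫ ω, Y ω ∂μ := by
  have hmap := (indepFun_iff_map_prod_eq_prod_map_map hX hY).1 h
  have hp : AEMeasurable (fun ω => (X ω, Y ω)) μ := hX.prodMk hY
  have : IsProbabilityMeasure (μ.map Y) := Measure.isProbabilityMeasure_map hY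
  calc ∫ ω, X ω * Y ω ∂μ
      = ∫ p : ℂ × ℂ, p.1 * p.2 ∂(μ.map fun ω => (X ω, Y ω)) := by
        rw [integral_map (f := fun p : ℂ × ℂ => p.1 * p.2) hp ((measurable_fst.mul measurable_snd).aestronglyMeasurable)]
    _ = ∫ p : ℂ × ℂ, id p.1 * id p.2 ∂((μ.map X).prod (μ.map Y)) := by rw [hmap]; rfl
    _ = (∫ x, id x ∂(μ.map X)) * ∫ y, id y ∂(μ.map Y) := integral_prod_mul id id
    _ = _ := by
        rw [integral_map hX aestronglyMeasurable_id, integral_map hY aestronglyMeasurable_id]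
        rfl

lemma aux_prod {Ω : Type*} [MeasurableSpace Ω] {μ : Measure Ω} [IsProbabilityMeasure μ]
    {ι : Type*} {Y : ι → Ω → ℂ}
    (hindep : iIndepFun Y μ)
    (hmeas : ∀ i, Measurable (Y i)) (hint : ∀ i, Integrable (Y i) μ)
    (s : Finset ι) :
    Integrable (fun ω => ∏ p ∈ s, Y p ω) μ ∧
      (∫ ω, ∏ p ∈ s, Y p ω ∂μ) = ∏ p ∈ s, ∫ ω, Y p ω ∂μ := by
  classical
  induction s using Finset.induction_on with
  | empty => simp
  | @insert a s ha ih =>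
    have hIF : IndepFun (∏ j ∈ s, Y j) (Y a) μ :=
      hindep.indepFun_finsetProd_of_notMem hmeas ha
    have hps : (∏ j ∈ s, Y j) = fun ω => ∏ j ∈ s, Y j ω := by
      funext ω; simp
    have h1 : Integrable (fun ω => (∏ j ∈ s, Y j ω) * Y a ω) μ := by
      have := hIF.integrable_mul (hps ▸ ih.1) (hint a)
      simpa [hps, Pi.mul_def] using this
    constructor
    · simp only [Finset.prod_insert ha]
      simpa [mul_comm] using h1
    · simp only [Finset.prod_insert ha]
      have : (∫ ω, (∏ j ∈ s, Y j ω) * Y a ω ∂μ) =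
          (∫ ω, ∏ j ∈ s, Y j ω ∂μ) * ∫ ω, Y a ω ∂μ := by
        refine aux_integral_mul ?_ ?_ (hmeas a).aemeasurable
        · simpa [hps] using hIF
        · exact (Finset.aemeasurable_fun_prod _ fun j _ => (hmeas j).aemeasurable)
      simp only [ih.2] at this
      rw [show (fun ω => Y a ω * ∏ j ∈ s, Y j ω) = fun ω => (∏ j ∈ s, Y j ω) * Y a ω by
        funext ω; ring]
      rw [this]; ring

/-- monomial in `z` and `conj z`. -/
def gfun (c d : ℕ) (z : ℂ) : ℂ := (starRingEnd ℂ z) ^ c * z ^ d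

/-- indicator exponent -/
def efun {n : ℕ} (i p : Fin n) : ℕ := if p = i then 1 else 0

lemma gfun_meas (c d : ℕ) : Measurable (gfun c d) := by
  unfold gfun
  exact ((Complex.continuous_conj.measurable).pow_const c).mul (measurable_id.pow_const d)

lemma efun_le {n : ℕ} (i p : Fin n) : efun i p ≤ 1 := by
  unfold efun; split <;> simp

lemma pow_le_one_add_pow_four (t : ℝ) (ht : 0 ≤ t) {k : ℕ} (hk : k ≤ 4) :
    t ^ k ≤ 1 + t ^ 4 := by
  rcases le_total t 1 with h | h
  · exact le_add_of_le_of_nonneg (pow_le_one₀ ht h) (pow_nonneg ht _)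
  · exact le_add_of_nonneg_of_le zero_le_one (pow_le_pow_right₀ h hk)

theorem stmt_0 {Ω : Type*} [MeasurableSpace Ω] (μ : Measure Ω) [IsProbabilityMeasure μ]
    {n : ℕ} (hn : 0 < n) (X : Fin n → Ω → ℂ)
    (hmeas : ∀ i, Measurable (X i))
    (hindep : iIndepFun X μ)
    (hident : ∀ i, IdentDistrib (X i) (X ⟨0, hn⟩) μ μ)
    (hmean : (∫ ω, X ⟨0, hn⟩ ω ∂μ) = 0)
    (hvar : (∫ ω, ‖X ⟨0, hn⟩ ω‖ ^ 2 ∂μ) = 1)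
    (h4 : Integrable (fun ω => ‖X ⟨0, hn⟩ ω‖ ^ 4) μ)
    (M N : Matrix (Fin n) (Fin n) ℂ) :
    (∫ ω, ((∑ i, ∑ j, (starRingEnd ℂ) (X i ω) * M i j * X j ω) - Matrix.trace M) *
        ((∑ i, ∑ j, (starRingEnd ℂ) (X i ω) * N i j * X j ω) - Matrix.trace N) ∂μ) =
      (((∫ ω, ‖X ⟨0, hn⟩ ω‖ ^ 4 ∂μ) - ‖∫ ω, (X ⟨0, hn⟩ ω) ^ 2 ∂μ‖ ^ 2 - 2 : ℝ) : ℂ) *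
          (∑ i, M i i * N i i) +
        ((‖∫ ω, (X ⟨0, hn⟩ ω) ^ 2 ∂μ‖ ^ 2 : ℝ) : ℂ) * Matrix.trace (M * Nᵀ) +
        Matrix.trace (M * N) := by
  classical
  set m4 : ℝ := ∫ ω, ‖X ⟨0, hn⟩ ω‖ ^ 4 ∂μ with hm4def
  set m2 : ℂ := ∫ ω, (X ⟨0, hn⟩ ω) ^ 2 ∂μ with hm2def
  -- integrability of 4th powers for every coordinate
  have hX4 : ∀ i, Integrable (fun ω => ‖X i ω‖ ^ 4) μ := by
    intro i
    have := ((hident i).comp (measurable_norm.pow_const 4)).integrable_iff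
    exact this.2 h4
  -- integrability of monomials of degree up to 4
  have hintg : ∀ c d : ℕ, c + d ≤ 4 → ∀ i, Integrable (fun ω => gfun c d (X i ω)) μ := by
    intro c d hcd i
    refine Integrable.mono' ((integrable_const (1 : ℝ)).add (hX4 i))
      (((gfun_meas c d).comp (hmeas i)).aestronglyMeasurable) ?_
    filter_upwards with ω
    have hnorm : ‖gfun c d (X i ω)‖ = ‖X i ω‖ ^ (c + d) := by
      simp [gfun, norm_mul, norm_pow, pow_add]
    rw [hnorm]
    exact pow_le_one_add_pow_four _ (norm_nonneg _) hcd
  -- moments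
  set mom : ℕ → ℕ → ℂ := fun c d => ∫ ω, gfun c d (X ⟨0, hn⟩ ω) ∂μ with hmomdef
  have hmom : ∀ (i : Fin n) (c d : ℕ), (∫ ω, gfun c d (X i ω) ∂μ) = mom c d := by
    intro i c d
    exact ((hident i).comp (gfun_meas c d)).integral_eq
  have hmom00 : mom 0 0 = 1 := by simp [hmomdef, gfun]
  have hmom01 : mom 0 1 = 0 := by simpa [hmomdef, gfun] using hmean
  have hmom10 : mom 1 0 = 0 := by
    have : mom 1 0 = ∫ ω, (starRingEnd ℂ) (X ⟨0, hn⟩ ω) ∂μ := by simp [hmomdef, gfun]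
    rw [this, integral_conj, hmean, map_zero]
  have hmom11 : mom 1 1 = 1 := by
    have h1 : ∀ z : ℂ, gfun 1 1 z = ((‖z‖ ^ 2 : ℝ) : ℂ) := by
      intro z
      rw [gfun, pow_one, pow_one, mul_comm, Complex.mul_conj]
      norm_cast
      rw [Complex.sq_norm]
    calc mom 1 1 = ∫ ω, ((‖X ⟨0, hn⟩ ω‖ ^ 2 : ℝ) : ℂ) ∂μ := by
          rw [hmomdef]; exact integral_congr_ae (Filter.Eventually.of_forall fun ω => h1 _)
      _ = ((∫ ω, ‖X ⟨0, hn⟩ ω‖ ^ 2 ∂μ : ℝ) : ℂ) := integral_ofReal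
      _ = 1 := by rw [hvar]; norm_num
  have hmom02 : mom 0 2 = m2 := by
    rw [hm2def, hmomdef]; simp [gfun]
  have hmom20 : mom 2 0 = (starRingEnd ℂ) m2 := by
    have : mom 2 0 = ∫ ω, (starRingEnd ℂ) ((X ⟨0, hn⟩ ω) ^ 2) ∂μ := by
      rw [hmomdef]; simp [gfun, map_pow]
    rw [this, integral_conj, hm2def]
  have hmom22 : mom 2 2 = ((m4 : ℝ) : ℂ) := by
    have h1 : ∀ z : ℂ, gfun 2 2 z = ((‖z‖ ^ 4 : ℝ) : ℂ) := by
      intro z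
      have : gfun 2 2 z = ((starRingEnd ℂ) z * z) ^ 2 := by rw [gfun]; ring
      rw [this, mul_comm, Complex.mul_conj]
      norm_cast
      rw [← Complex.sq_norm]
      ring
    calc mom 2 2 = ∫ ω, ((‖X ⟨0, hn⟩ ω‖ ^ 4 : ℝ) : ℂ) ∂μ := by
          rw [hmomdef]; exact integral_congr_ae (Filter.Eventually.of_forall fun ω => h1 _)
      _ = ((∫ ω, ‖X ⟨0, hn⟩ ω‖ ^ 4 ∂μ : ℝ) : ℂ) := integral_ofReal
      _ = ((m4 : ℝ) : ℂ) := by rw [hm4def]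
  have hconjm2 : (starRingEnd ℂ) m2 * m2 = ((‖m2‖ ^ 2 : ℝ) : ℂ) := by
    rw [mul_comm, Complex.mul_conj]
    norm_cast
    rw [Complex.sq_norm]
  -- key integral-of-product lemma
  have hkey : ∀ c d : Fin n → ℕ, (∀ p, c p + d p ≤ 4) →
      Integrable (fun ω => ∏ p, gfun (c p) (d p) (X p ω)) μ ∧
      (∫ ω, ∏ p, gfun (c p) (d p) (X p ω) ∂μ) = ∏ p, mom (c p) (d p) := by
    intro c d h
    have H := aux_prod (Y := fun p ω => gfun (c p) (d p) (X p ω))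
      (hindep.comp (fun p => gfun (c p) (d p)) (fun p => gfun_meas _ _))
      (fun p => (gfun_meas _ _).comp (hmeas p))
      (fun p => hintg _ _ (h p) p) Finset.univ
    exact ⟨H.1, H.2.trans (Finset.prod_congr rfl fun p _ => hmom p _ _)⟩
  -- pointwise product identities
  have hsingle : ∀ (w : Fin n → ℂ) (a : Fin n), (∏ p, w p ^ (efun a p)) = w a := by
    intro w a
    rw [Finset.prod_eq_single a]
    · simp [efun]
    · intro p _ hp; simp [efun, hp]
    · intro h; exact absurd (Finset.mem_univ a) h
  have hprodg2 : ∀ (i j : Fin n) (ω : Ω),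
      (∏ p, gfun (efun i p) (efun j p) (X p ω)) = (starRingEnd ℂ) (X i ω) * X j ω := by
    intro i j ω
    simp only [gfun, Finset.prod_mul_distrib]
    rw [hsingle (fun p => (starRingEnd ℂ) (X p ω)) i, hsingle (fun p => X p ω) j]
  have hprodg4 : ∀ (i j k l : Fin n) (ω : Ω),
      (∏ p, gfun (efun i p + efun k p) (efun j p + efun l p) (X p ω)) =
        (starRingEnd ℂ) (X i ω) * X j ω * ((starRingEnd ℂ) (X k ω) * X l ω) := by
    intro i j k l ω
    simp only [gfun, pow_add, Finset.prod_mul_distrib]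
    rw [hsingle (fun p => (starRingEnd ℂ) (X p ω)) i, hsingle (fun p => (starRingEnd ℂ) (X p ω)) k,
      hsingle (fun p => X p ω) j, hsingle (fun p => X p ω) l]
    ring
  have hb2 : ∀ (i j p : Fin n), efun i p + efun j p ≤ 4 := fun i j p =>
    le_trans (add_le_add (efun_le i p) (efun_le j p)) (by norm_num)
  have hb4 : ∀ (i j k l p : Fin n), (efun i p + efun k p) + (efun j p + efun l p) ≤ 4 :=
    fun i j k l p =>
      le_trans (add_le_add (add_le_add (efun_le i p) (efun_le k p))
        (add_le_add (efun_le j p) (efun_le l p))) (by norm_num)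
  -- pair moments
  have hpairint : ∀ i j : Fin n, Integrable (fun ω => (starRingEnd ℂ) (X i ω) * X j ω) μ :=
    fun i j => ((hkey (efun i) (efun j) (fun p => hb2 i j p)).1).congr
      (Filter.Eventually.of_forall fun ω => hprodg2 i j ω)
  have hpairval : ∀ i j : Fin n,
      (∫ ω, (starRingEnd ℂ) (X i ω) * X j ω ∂μ) = if i = j then 1 else 0 := by
    intro i j
    rw [integral_congr_ae (Filter.Eventually.of_forall fun ω => (hprodg2 i j ω).symm),
      (hkey (efun i) (efun j) (fun p => hb2 i j p)).2]
    by_cases hij : i = j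
    · subst hij
      rw [if_pos rfl, Finset.prod_eq_single i (fun p _ hp => by simp [efun, hp, hmom00])
        (fun h => absurd (Finset.mem_univ i) h)]
      simp [efun, hmom11]
    · rw [if_neg hij]
      refine Finset.prod_eq_zero (Finset.mem_univ i) ?_
      simp [efun, hij, hmom10]
  have hprodtwo : ∀ (F : Fin n → ℂ) (a b : Fin n), a ≠ b →
      (∀ p, p ≠ a → p ≠ b → F p = 1) → (∏ p, F p) = F a * F b := by
    intro F a b hab h
    rw [← Finset.prod_subset (Finset.subset_univ ({a, b} : Finset (Fin n)))
        (fun p _ hp => h p (fun h' => hp (by simp [h'])) (fun h' => hp (by simp [h'])))]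
    exact Finset.prod_pair hab
  have hEval : ∀ i j k l : Fin n,
      (∏ p, mom (efun i p + efun k p) (efun j p + efun l p)) =
        (if i = j then (1:ℂ) else 0) * (if k = l then 1 else 0) +
        (if i = l then (1:ℂ) else 0) * (if j = k then 1 else 0) +
        ((‖m2‖ ^ 2 : ℝ) : ℂ) * ((if i = k then (1:ℂ) else 0) * (if j = l then 1 else 0)) +
        (((m4 : ℝ) : ℂ) - ((‖m2‖ ^ 2 : ℝ) : ℂ) - 2) *
          ((if i = j then (1:ℂ) else 0) * (if j = k then 1 else 0) *
            (if k = l then 1 else 0)) := by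
    intro i j k l
    by_cases hij : i = j
    · subst hij
      by_cases hkl : k = l
      · subst hkl
        by_cases hik : i = k
        · subst hik
          rw [Finset.prod_eq_single i (fun p _ hp => by simp [efun, hp, hmom00])
            (fun h => absurd (Finset.mem_univ i) h)]
          simp [efun, hmom22]
          ring
        · have hki : ¬ k = i := fun h => hik h.symm
          rw [hprodtwo _ i k hik (fun p hpi hpk => by simp [efun, hpi, hpk, hmom00])]
          simp [efun, hik, hki, hmom11]
      · -- i = j, k ≠ l : zero
        by_cases hki : k = i
        · subst hki
          have hkl' : ¬ l = k := fun h => hkl h.symm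
          have h0 : (∏ p, mom (efun k p + efun k p) (efun k p + efun l p)) = 0 :=
            Finset.prod_eq_zero (Finset.mem_univ l) (by simp [efun, hkl', hmom01])
          rw [h0]; simp [hkl]
        · have h0 : (∏ p, mom (efun i p + efun k p) (efun i p + efun l p)) = 0 :=
            Finset.prod_eq_zero (Finset.mem_univ k) (by
              have hlk : ¬ k = l := hkl
              simp [efun, hki, hlk, hmom10])
          rw [h0]
          have hik : ¬ i = k := fun h => hki h.symm
          simp [hkl, hik]
    · by_cases hkl : k = l
      · subst hkl
        by_cases hik : i = k
        · subst hik
          have hji : ¬ j = i := fun h => hij h.symm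
          have h0 : (∏ p, mom (efun i p + efun i p) (efun j p + efun i p)) = 0 :=
            Finset.prod_eq_zero (Finset.mem_univ j) (by simp [efun, hji, hmom01])
          rw [h0]; simp [hij, hji]
        · have h0 : (∏ p, mom (efun i p + efun k p) (efun j p + efun k p)) = 0 :=
            Finset.prod_eq_zero (Finset.mem_univ i) (by
              have hji : ¬ i = j := hij
              simp [efun, hik, hji, hmom10])
          rw [h0]; simp [hij, hik]
      · by_cases hil : i = l
        · by_cases hjk : j = k
          · subst hil; subst hjk
            -- now variables i j with i ≠ j (hij); pattern (i j j i)
            have hji : ¬ j = i := fun h => hij h.symm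
            rw [hprodtwo _ i j hij (fun p hpi hpj => by simp [efun, hpi, hpj, hmom00])]
            simp [efun, hij, hji, hmom11]
          · subst hil
            -- (i j k i), i ≠ j, j ≠ k, k ≠ i (from hkl : k ≠ l = i)
            have hji : ¬ j = i := fun h => hij h.symm
            have hjk' : ¬ j = k := hjk
            have h0 : (∏ p, mom (efun i p + efun k p) (efun j p + efun i p)) = 0 :=
              Finset.prod_eq_zero (Finset.mem_univ j) (by simp [efun, hji, hjk', hmom01])
            rw [h0]
            have hik : ¬ i = k := fun h => hkl h.symm
            simp [hij, hjk, hik]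
        · by_cases hjk : j = k
          · subst hjk
            -- (i j j l), i ≠ j, j ≠ l, i ≠ l
            have hij' : ¬ i = j := hij
            have hil' : ¬ i = l := hil
            have h0 : (∏ p, mom (efun i p + efun j p) (efun j p + efun l p)) = 0 :=
              Finset.prod_eq_zero (Finset.mem_univ i) (by simp [efun, hij', hil', hmom10])
            rw [h0]; simp [hij, hil]
          · by_cases hik : i = k
            · by_cases hjl : j = l
              · subst hik; subst hjl
                -- (i j i j), i ≠ j
                have hji : ¬ j = i := fun h => hij h.symm
                rw [hprodtwo _ i j hij (fun p hpi hpj => by simp [efun, hpi, hpj, hmom00])]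
                simp [efun, hij, hji, hmom20, hmom02, hconjm2]
              · subst hik
                -- (i j i l), i ≠ j, j ≠ l
                have hji : ¬ j = i := fun h => hij h.symm
                have hjl' : ¬ j = l := hjl
                have h0 : (∏ p, mom (efun i p + efun i p) (efun j p + efun l p)) = 0 :=
                  Finset.prod_eq_zero (Finset.mem_univ j) (by simp [efun, hji, hjl', hmom01])
                rw [h0]; simp [hij, hjl, hji]
            · -- i distinct from j, k, l
              have hij' : ¬ i = j := hij
              have hik' : ¬ i = k := hik
              have hil' : ¬ i = l := hil
              have h0 : (∏ p, mom (efun i p + efun k p) (efun j p + efun l p)) = 0 :=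
                Finset.prod_eq_zero (Finset.mem_univ i) (by simp [efun, hij', hik', hil', hmom10])
              rw [h0]; simp [hij, hik, hil]
  -- quadruple term integrals
  have hterm_int : ∀ (P : Matrix (Fin n) (Fin n) ℂ) (i j : Fin n),
      Integrable (fun ω => (starRingEnd ℂ) (X i ω) * P i j * X j ω) μ := by
    intro P i j
    have heq : (fun ω => (starRingEnd ℂ) (X i ω) * P i j * X j ω)
        = fun ω => P i j * ((starRingEnd ℂ) (X i ω) * X j ω) := by funext ω; ring
    rw [heq]; exact (hpairint i j).const_mul _
  have hterm_val : ∀ (P : Matrix (Fin n) (Fin n) ℂ) (i j : Fin n),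
      (∫ ω, (starRingEnd ℂ) (X i ω) * P i j * X j ω ∂μ)
        = P i j * (if i = j then 1 else 0) := by
    intro P i j
    have heq : (fun ω => (starRingEnd ℂ) (X i ω) * P i j * X j ω)
        = fun ω => P i j * ((starRingEnd ℂ) (X i ω) * X j ω) := by funext ω; ring
    rw [heq, integral_const_mul, hpairval]
  have hAint : ∀ (P : Matrix (Fin n) (Fin n) ℂ),
      Integrable (fun ω => ∑ i, ∑ j, (starRingEnd ℂ) (X i ω) * P i j * X j ω) μ :=
    fun P => integrable_finset_sum _ fun i _ => integrable_finset_sum _ fun j _ =>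
      hterm_int P i j
  have hAval : ∀ (P : Matrix (Fin n) (Fin n) ℂ),
      (∫ ω, ∑ i, ∑ j, (starRingEnd ℂ) (X i ω) * P i j * X j ω ∂μ) = Matrix.trace P := by
    intro P
    rw [integral_finset_sum _ (fun i _ => integrable_finset_sum _ fun j _ => hterm_int P i j)]
    have h1 : ∀ i : Fin n, (∫ ω, ∑ j, (starRingEnd ℂ) (X i ω) * P i j * X j ω ∂μ)
        = ∑ j, P i j * (if i = j then 1 else 0) := by
      intro i
      rw [integral_finset_sum _ fun j _ => hterm_int P i j]
      exact Finset.sum_congr rfl fun j _ => hterm_val P i j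
    rw [Finset.sum_congr rfl fun i _ => h1 i]
    simp [Matrix.trace, Matrix.diag, mul_ite]
  -- the product expansion
  have hABpt : ∀ ω : Ω,
      (∑ i, ∑ j, (starRingEnd ℂ) (X i ω) * M i j * X j ω) *
        (∑ i, ∑ j, (starRingEnd ℂ) (X i ω) * N i j * X j ω)
      = ∑ i, ∑ j, ∑ k, ∑ l, M i j * N k l *
          (∏ p, gfun (efun i p + efun k p) (efun j p + efun l p) (X p ω)) := by
    intro ω
    simp_rw [Finset.sum_mul, Finset.mul_sum]
    refine Finset.sum_congr rfl fun i _ => Finset.sum_congr rfl fun j _ =>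
      Finset.sum_congr rfl fun k _ => Finset.sum_congr rfl fun l _ => ?_
    rw [hprodg4 i j k l ω]; ring
  have hABfun : (fun ω => (∑ i, ∑ j, (starRingEnd ℂ) (X i ω) * M i j * X j ω) *
        (∑ i, ∑ j, (starRingEnd ℂ) (X i ω) * N i j * X j ω))
      = fun ω => ∑ i, ∑ j, ∑ k, ∑ l, M i j * N k l *
          (∏ p, gfun (efun i p + efun k p) (efun j p + efun l p) (X p ω)) :=
    funext hABpt
  have hABint : Integrable (fun ω =>
      (∑ i, ∑ j, (starRingEnd ℂ) (X i ω) * M i j * X j ω) *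
        (∑ i, ∑ j, (starRingEnd ℂ) (X i ω) * N i j * X j ω)) μ := by
    rw [hABfun]
    exact integrable_finset_sum _ fun i _ => integrable_finset_sum _ fun j _ =>
      integrable_finset_sum _ fun k _ => integrable_finset_sum _ fun l _ =>
        ((hkey _ _ (hb4 i j k l)).1).const_mul _
  have hABval : (∫ ω, (∑ i, ∑ j, (starRingEnd ℂ) (X i ω) * M i j * X j ω) *
        (∑ i, ∑ j, (starRingEnd ℂ) (X i ω) * N i j * X j ω) ∂μ)
      = ∑ i, ∑ j, ∑ k, ∑ l, M i j * N k l *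
          ((if i = j then (1:ℂ) else 0) * (if k = l then 1 else 0) +
          (if i = l then (1:ℂ) else 0) * (if j = k then 1 else 0) +
          ((‖m2‖ ^ 2 : ℝ) : ℂ) * ((if i = k then (1:ℂ) else 0) * (if j = l then 1 else 0)) +
          (((m4 : ℝ) : ℂ) - ((‖m2‖ ^ 2 : ℝ) : ℂ) - 2) *
            ((if i = j then (1:ℂ) else 0) * (if j = k then 1 else 0) *
              (if k = l then 1 else 0))) := by
    rw [hABfun]
    rw [integral_finset_sum _ (fun i _ => integrable_finset_sum _ fun j _ =>
      integrable_finset_sum _ fun k _ => integrable_finset_sum _ fun l _ =>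
        ((hkey _ _ (hb4 i j k l)).1).const_mul _)]
    refine Finset.sum_congr rfl fun i _ => ?_
    rw [integral_finset_sum _ (fun j _ => integrable_finset_sum _ fun k _ =>
      integrable_finset_sum _ fun l _ => ((hkey _ _ (hb4 i j k l)).1).const_mul _)]
    refine Finset.sum_congr rfl fun j _ => ?_
    rw [integral_finset_sum _ (fun k _ => integrable_finset_sum _ fun l _ =>
      ((hkey _ _ (hb4 i j k l)).1).const_mul _)]
    refine Finset.sum_congr rfl fun k _ => ?_
    rw [integral_finset_sum _ (fun l _ => ((hkey _ _ (hb4 i j k l)).1).const_mul _)]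
    refine Finset.sum_congr rfl fun l _ => ?_
    rw [integral_const_mul, (hkey _ _ (hb4 i j k l)).2, hEval]
  -- evaluation of the combinatorial sums
  have p1 : (∑ i, ∑ j, ∑ k, ∑ l, M i j * N k l *
        ((if i = j then (1:ℂ) else 0) * (if k = l then 1 else 0)))
      = Matrix.trace M * Matrix.trace N := by
    have h : ∀ i j k l : Fin n, M i j * N k l *
        ((if i = j then (1:ℂ) else 0) * (if k = l then 1 else 0))
        = (if i = j then M i j else 0) * (if k = l then N k l else 0) := by
      intro i j k l; split_ifs <;> ring
    simp_rw [h, ← Finset.mul_sum, ← Finset.sum_mul]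
    rw [show (∑ i, ∑ j, if i = j then M i j else 0) = Matrix.trace M by
      simp [Matrix.trace, Matrix.diag, Finset.sum_ite_eq]]
    rw [show (∑ k, ∑ l, if k = l then N k l else 0) = Matrix.trace N by
      simp [Matrix.trace, Matrix.diag, Finset.sum_ite_eq]]
  have p2 : (∑ i, ∑ j, ∑ k, ∑ l, M i j * N k l *
        ((if i = l then (1:ℂ) else 0) * (if j = k then 1 else 0)))
      = Matrix.trace (M * N) := by
    have h : ∀ i j k l : Fin n, M i j * N k l *
        ((if i = l then (1:ℂ) else 0) * (if j = k then 1 else 0))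
        = (if i = l then (if j = k then M i j * N k l else 0) else 0) := by
      intro i j k l; split_ifs <;> ring
    simp_rw [h, Finset.sum_ite_eq, Finset.mem_univ, if_true]
    simp [Matrix.trace, Matrix.mul_apply, Matrix.diag]
  have p3 : (∑ i, ∑ j, ∑ k, ∑ l, M i j * N k l *
        (((‖m2‖ ^ 2 : ℝ) : ℂ) * ((if i = k then (1:ℂ) else 0) * (if j = l then 1 else 0))))
      = ((‖m2‖ ^ 2 : ℝ) : ℂ) * Matrix.trace (M * Nᵀ) := by
    have h : ∀ i j k l : Fin n, M i j * N k l *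
        (((‖m2‖ ^ 2 : ℝ) : ℂ) * ((if i = k then (1:ℂ) else 0) * (if j = l then 1 else 0)))
        = (if j = l then (if i = k then ((‖m2‖ ^ 2 : ℝ) : ℂ) * (M i j * N k l) else 0)
            else 0) := by
      intro i j k l; split_ifs <;> ring
    simp_rw [h, Finset.sum_ite_eq, Finset.mem_univ, if_true]
    simp [Matrix.trace, Matrix.mul_apply, Matrix.diag, Matrix.transpose_apply,
      Finset.mul_sum]
  have p4 : (∑ i, ∑ j, ∑ k, ∑ l, M i j * N k l *
        ((((m4 : ℝ) : ℂ) - ((‖m2‖ ^ 2 : ℝ) : ℂ) - 2) *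
          ((if i = j then (1:ℂ) else 0) * (if j = k then 1 else 0) *
            (if k = l then 1 else 0))))
      = (((m4 : ℝ) : ℂ) - ((‖m2‖ ^ 2 : ℝ) : ℂ) - 2) * ∑ i, M i i * N i i := by
    have h : ∀ i j k l : Fin n, M i j * N k l *
        ((((m4 : ℝ) : ℂ) - ((‖m2‖ ^ 2 : ℝ) : ℂ) - 2) *
          ((if i = j then (1:ℂ) else 0) * (if j = k then 1 else 0) *
            (if k = l then 1 else 0)))
        = (if k = l then (if j = k then (if i = j then
            ((((m4 : ℝ) : ℂ) - ((‖m2‖ ^ 2 : ℝ) : ℂ) - 2) * (M i j * N k l)) else 0) else 0)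
            else 0) := by
      intro i j k l; split_ifs <;> ring
    simp_rw [h, Finset.sum_ite_eq, Finset.mem_univ, if_true]
    simp [Finset.mul_sum]
  have hEsum : (∑ i, ∑ j, ∑ k, ∑ l, M i j * N k l *
        ((if i = j then (1:ℂ) else 0) * (if k = l then 1 else 0) +
        (if i = l then (1:ℂ) else 0) * (if j = k then 1 else 0) +
        ((‖m2‖ ^ 2 : ℝ) : ℂ) * ((if i = k then (1:ℂ) else 0) * (if j = l then 1 else 0)) +
        (((m4 : ℝ) : ℂ) - ((‖m2‖ ^ 2 : ℝ) : ℂ) - 2) *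
          ((if i = j then (1:ℂ) else 0) * (if j = k then 1 else 0) *
            (if k = l then 1 else 0))))
      = Matrix.trace M * Matrix.trace N + Matrix.trace (M * N) +
        ((‖m2‖ ^ 2 : ℝ) : ℂ) * Matrix.trace (M * Nᵀ) +
        (((m4 : ℝ) : ℂ) - ((‖m2‖ ^ 2 : ℝ) : ℂ) - 2) * ∑ i, M i i * N i i := by
    simp_rw [mul_add, Finset.sum_add_distrib]
    rw [p1, p2, p3, p4]
  -- final assembly
  have hIB : Integrable (fun ω => Matrix.trace M *
      (∑ i, ∑ j, (starRingEnd ℂ) (X i ω) * N i j * X j ω)) μ := (hAint N).const_mul _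
  have hIA : Integrable (fun ω => Matrix.trace N *
      (∑ i, ∑ j, (starRingEnd ℂ) (X i ω) * M i j * X j ω)) μ := (hAint M).const_mul _
  have h5 : Integrable (fun ω =>
      (∑ i, ∑ j, (starRingEnd ℂ) (X i ω) * M i j * X j ω) *
        (∑ i, ∑ j, (starRingEnd ℂ) (X i ω) * N i j * X j ω) -
      Matrix.trace M * (∑ i, ∑ j, (starRingEnd ℂ) (X i ω) * N i j * X j ω)) μ :=
    hABint.sub hIB
  have h6 : Integrable (fun ω =>
      ((∑ i, ∑ j, (starRingEnd ℂ) (X i ω) * M i j * X j ω) *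
        (∑ i, ∑ j, (starRingEnd ℂ) (X i ω) * N i j * X j ω) -
      Matrix.trace M * (∑ i, ∑ j, (starRingEnd ℂ) (X i ω) * N i j * X j ω)) -
      Matrix.trace N * (∑ i, ∑ j, (starRingEnd ℂ) (X i ω) * M i j * X j ω)) μ :=
    h5.sub hIA
  have hexp : ∀ ω : Ω,
      ((∑ i, ∑ j, (starRingEnd ℂ) (X i ω) * M i j * X j ω) - Matrix.trace M) *
        ((∑ i, ∑ j, (starRingEnd ℂ) (X i ω) * N i j * X j ω) - Matrix.trace N)
      = (((∑ i, ∑ j, (starRingEnd ℂ) (X i ω) * M i j * X j ω) *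
          (∑ i, ∑ j, (starRingEnd ℂ) (X i ω) * N i j * X j ω) -
        Matrix.trace M * (∑ i, ∑ j, (starRingEnd ℂ) (X i ω) * N i j * X j ω)) -
        Matrix.trace N * (∑ i, ∑ j, (starRingEnd ℂ) (X i ω) * M i j * X j ω)) +
        Matrix.trace M * Matrix.trace N := by
    intro ω; ring
  rw [integral_congr_ae (Filter.Eventually.of_forall hexp)]
  rw [integral_add h6 (integrable_const _), integral_sub h5 hIA, integral_sub hABint hIB,
    integral_const_mul, integral_const_mul, hAval M, hAval N, integral_const, hABval, hEsum]
  simp only [measure_univ, probReal_univ, ENNReal.toReal_one, one_smul]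
  push_cast
  ring
end

section
/- Let A be an n×n Hermitian complex matrix with spectral decomposition A = U·diag(λ₁,…,λₙ)·U*, where U is unitary and λ₁,…,λₙ are the (real) eigenvalues of A. Let c ∈ ℝ and R > 0 satisfy |λᵢ − c| < R for every i, let B be any n×n complex matrix, and let f : ℂ → ℂ be complex-differentiable on an open set containing the closed disc {z ∈ ℂ : |z − c| ≤ R}. Then A − z·I is invertible for every z on the circle |z − c| = R, and, with f(A) := U·diag(f(λ₁),…,f(λₙ))·U*, one has tr(f(A)·B) = −(1/(2πi))·∮_{|z−c|=R} f(z)·tr((A − z·I)^{-1}·B) dz, where the circle is traversed once in the positive (counterclockwise) direction. -/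
open Matrix

open Metric Real Complex Finset in
private lemma circle_sum {ι : Type*} (s : Finset ι) (F : ι → ℂ → ℂ) (c : ℂ) (R : ℝ)
    (h : ∀ i ∈ s, CircleIntegrable (F i) c R) :
    (∮ z in C(c, R), ∑ i ∈ s, F i z) = ∑ i ∈ s, ∮ z in C(c, R), F i z := by
  simp only [circleIntegral, Finset.smul_sum]
  exact intervalIntegral.integral_finset_sum fun i hi => (h i hi).out

theorem stmt_7 {n : ℕ} (A : Matrix (Fin n) (Fin n) ℂ) (hA : A.IsHermitian)
    (U : Matrix (Fin n) (Fin n) ℂ) (hU : U ∈ Matrix.unitaryGroup (Fin n) ℂ)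
    (lam : Fin n → ℝ)
    (hdecomp : A = U * Matrix.diagonal (fun i => (lam i : ℂ)) * Uᴴ)
    (c R : ℝ) (hR : 0 < R) (hlam : ∀ i, |lam i - c| < R)
    (B : Matrix (Fin n) (Fin n) ℂ) (f : ℂ → ℂ)
    (hf : ∃ V : Set ℂ, IsOpen V ∧ Metric.closedBall (c : ℂ) R ⊆ V ∧ DifferentiableOn ℂ f V) :
    (∀ z : ℂ, ‖z - (c : ℂ)‖ = R → IsUnit (A - z • (1 : Matrix (Fin n) (Fin n) ℂ))) ∧
    Matrix.trace (U * Matrix.diagonal (fun i => f ((lam i : ℂ))) * Uᴴ * B) =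
      -(1 / (2 * (Real.pi : ℂ) * Complex.I)) *
        (∮ z in C((c : ℂ), R), f z *
          Matrix.trace ((A - z • (1 : Matrix (Fin n) (Fin n) ℂ))⁻¹ * B)) := by
  obtain ⟨V, hVopen, hVsub, hfV⟩ := hf
  have hUU : Uᴴ * U = 1 := by
    have := hU.1
    simpa [Matrix.star_eq_conjTranspose] using this
  have hUU' : U * Uᴴ = 1 := by
    have := hU.2
    simpa [Matrix.star_eq_conjTranspose] using this
  -- distance facts
  have hmem : ∀ i, ((lam i : ℂ)) ∈ Metric.ball (c : ℂ) R := by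
    intro i
    have : ‖((lam i : ℂ)) - (c : ℂ)‖ = |lam i - c| := by
      rw [← Complex.ofReal_sub, Complex.norm_real, Real.norm_eq_abs]
    simp [Metric.mem_ball, dist_eq_norm, this, hlam i]
  have hne : ∀ (i : Fin n) (z : ℂ), ‖z - (c : ℂ)‖ = R → (lam i : ℂ) - z ≠ 0 := by
    intro i z hz h0
    have hz' : z = (lam i : ℂ) := by linear_combination -h0
    rw [hz'] at hz
    have := hmem i
    rw [Metric.mem_ball, dist_eq_norm] at this
    exact absurd hz (by linarith)
  -- A - z•1 decomposition
  have hAz : ∀ z : ℂ, A - z • (1 : Matrix (Fin n) (Fin n) ℂ) =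
      U * Matrix.diagonal (fun i => (lam i : ℂ) - z) * Uᴴ := by
    intro z
    have h1 : z • (1 : Matrix (Fin n) (Fin n) ℂ) =
        U * Matrix.diagonal (fun _ : Fin n => z) * Uᴴ := by
      have : Matrix.diagonal (fun _ : Fin n => z) = z • (1 : Matrix (Fin n) (Fin n) ℂ) := by
        ext i j
        by_cases h : i = j <;> simp [Matrix.one_apply, Matrix.diagonal_apply, h]
      rw [this]
      rw [Matrix.mul_smul, Matrix.smul_mul, mul_one, hUU']
    rw [hdecomp, h1, ← Matrix.sub_mul, ← Matrix.mul_sub, Matrix.diagonal_sub]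
  -- right inverse
  have hinv : ∀ z : ℂ, ‖z - (c : ℂ)‖ = R →
      (A - z • (1 : Matrix (Fin n) (Fin n) ℂ)) *
        (U * Matrix.diagonal (fun i => ((lam i : ℂ) - z)⁻¹) * Uᴴ) = 1 := by
    intro z hz
    rw [hAz z]
    have hd : Matrix.diagonal (fun i => ((lam i : ℂ) - z)) *
        Matrix.diagonal (fun i => ((lam i : ℂ) - z)⁻¹) = 1 := by
      rw [Matrix.diagonal_mul_diagonal]
      have hfun : (fun i => ((lam i : ℂ) - z) * ((lam i : ℂ) - z)⁻¹) =
          (fun _ : Fin n => (1 : ℂ)) := funext fun i => mul_inv_cancel₀ (hne i z hz)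
      rw [hfun, Matrix.diagonal_one]
    calc (U * Matrix.diagonal (fun i => (lam i : ℂ) - z) * Uᴴ) *
          (U * Matrix.diagonal (fun i => ((lam i : ℂ) - z)⁻¹) * Uᴴ)
        = U * (Matrix.diagonal (fun i => (lam i : ℂ) - z) * (Uᴴ * U) *
            Matrix.diagonal (fun i => ((lam i : ℂ) - z)⁻¹)) * Uᴴ := by noncomm_ring
      _ = U * (Matrix.diagonal (fun i => (lam i : ℂ) - z) *
            Matrix.diagonal (fun i => ((lam i : ℂ) - z)⁻¹)) * Uᴴ := by rw [hUU, mul_one]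
      _ = 1 := by rw [hd, mul_one, hUU']
  have hunit : ∀ z : ℂ, ‖z - (c : ℂ)‖ = R →
      IsUnit (A - z • (1 : Matrix (Fin n) (Fin n) ℂ)) := by
    intro z hz
    exact @isUnit_of_invertible _ _ _ (invertibleOfRightInverse _ _ (hinv z hz))
  refine ⟨hunit, ?_⟩
  -- inverse formula
  have hinvf : ∀ z : ℂ, ‖z - (c : ℂ)‖ = R →
      (A - z • (1 : Matrix (Fin n) (Fin n) ℂ))⁻¹ =
        U * Matrix.diagonal (fun i => ((lam i : ℂ) - z)⁻¹) * Uᴴ := fun z hz =>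
    Matrix.inv_eq_right_inv (hinv z hz)
  set M := Uᴴ * B * U with hM
  -- trace of U * diagonal g * Uᴴ * B
  have htr : ∀ g : Fin n → ℂ,
      Matrix.trace (U * Matrix.diagonal g * Uᴴ * B) = ∑ i, g i * M i i := by
    intro g
    have : U * Matrix.diagonal g * Uᴴ * B = U * (Matrix.diagonal g * (Uᴴ * B)) := by
      noncomm_ring
    rw [this, Matrix.trace_mul_comm]
    have : Matrix.diagonal g * (Uᴴ * B) * U = Matrix.diagonal g * M := by
      rw [hM]; noncomm_ring
    rw [this]
    simp [Matrix.trace, Matrix.diag, Matrix.diagonal_mul]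
  -- continuity of f on closed ball
  have hfc : ContinuousOn f (Metric.closedBall (c : ℂ) R) :=
    (hfV.continuousOn).mono hVsub
  have hdiff : DiffContOnCl ℂ f (Metric.ball (c : ℂ) R) := by
    apply DifferentiableOn.diffContOnCl
    rw [closure_ball (c : ℂ) hR.ne']
    exact hfV.mono hVsub
  have hsph : Metric.sphere (c : ℂ) R ⊆ Metric.closedBall (c : ℂ) R :=
    Metric.sphere_subset_closedBall
  -- integrability of each term
  have hci : ∀ i : Fin n, CircleIntegrable
      (fun z => M i i * (((lam i : ℂ) - z)⁻¹ * f z)) (c : ℂ) R := by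
    intro i
    apply ContinuousOn.circleIntegrable hR.le
    apply ContinuousOn.mul continuousOn_const
    apply ContinuousOn.mul
    · apply ContinuousOn.inv₀
      · exact (continuousOn_const.sub continuousOn_id)
      · intro z hz
        exact hne i z (by simpa [Metric.mem_sphere, dist_eq_norm] using hz)
    · exact hfc.mono hsph
  -- rewrite the integrand on the sphere
  have hcongr : (∮ z in C((c : ℂ), R), f z *
      Matrix.trace ((A - z • (1 : Matrix (Fin n) (Fin n) ℂ))⁻¹ * B)) =
      ∮ z in C((c : ℂ), R), ∑ i, M i i * (((lam i : ℂ) - z)⁻¹ * f z) := by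
    apply circleIntegral.integral_congr hR.le
    intro z hz
    have hz' : ‖z - (c : ℂ)‖ = R := by simpa [Metric.mem_sphere, dist_eq_norm] using hz
    show f z * Matrix.trace ((A - z • (1 : Matrix (Fin n) (Fin n) ℂ))⁻¹ * B) =
        ∑ i, M i i * (((lam i : ℂ) - z)⁻¹ * f z)
    rw [hinvf z hz', htr (fun i => ((lam i : ℂ) - z)⁻¹), Finset.mul_sum]
    apply Finset.sum_congr rfl
    intro i _
    ring
  rw [hcongr, circle_sum Finset.univ _ _ _ (fun i _ => hci i)]
  -- evaluate each integral
  have hint : ∀ i : Fin n,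
      (∮ z in C((c : ℂ), R), M i i * (((lam i : ℂ) - z)⁻¹ * f z)) =
        M i i * (-(2 * (Real.pi : ℂ) * Complex.I) * f (lam i : ℂ)) := by
    intro i
    rw [circleIntegral.integral_const_mul]
    congr 1
    have key : (∮ z in C((c : ℂ), R), (z - (lam i : ℂ))⁻¹ • f z) =
        (2 * (Real.pi : ℝ) * Complex.I : ℂ) • f (lam i : ℂ) :=
      hdiff.circleIntegral_sub_inv_smul (hmem i)
    have hneg : (∮ z in C((c : ℂ), R), ((lam i : ℂ) - z)⁻¹ * f z) =
        ∮ z in C((c : ℂ), R), (-1 : ℂ) * ((z - (lam i : ℂ))⁻¹ * f z) := by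
      apply circleIntegral.integral_congr hR.le
      intro z hz
      show ((lam i : ℂ) - z)⁻¹ * f z = (-1 : ℂ) * ((z - (lam i : ℂ))⁻¹ * f z)
      have : ((lam i : ℂ) - z)⁻¹ = -((z - (lam i : ℂ))⁻¹) := by
        rw [← neg_sub z ((lam i : ℂ)), inv_neg]
      rw [this]; ring
    rw [hneg, circleIntegral.integral_const_mul]
    have : (∮ z in C((c : ℂ), R), (z - (lam i : ℂ))⁻¹ * f z) =
        (2 * (Real.pi : ℝ) * Complex.I : ℂ) * f (lam i : ℂ) := by
      simpa [smul_eq_mul] using key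
    rw [this]
    push_cast
    ring
  rw [Finset.sum_congr rfl (fun i _ => hint i)]
  rw [htr (fun i => f (lam i : ℂ)), Finset.mul_sum]
  apply Finset.sum_congr rfl
  intro i _
  have hpi : (2 * (Real.pi : ℂ) * Complex.I) ≠ 0 := by
    simp [Real.pi_ne_zero, Complex.I_ne_zero]
  field_simp
end

section
/- Let H be a probability measure on ℝ, let c > 0, and let m₁, m₂ be nonzero complex numbers with m₁ ≠ m₂ such that for i = 1, 2: 1 + t·mᵢ ≠ 0 for H-almost every t, and the functions t ↦ t/(1 + t·mᵢ) and t ↦ t²/((1 + t·m₁)(1 + t·m₂)) are H-integrable. Define zᵢ = −1/mᵢ + c·∫ t/(1 + t·mᵢ) dH(t) for i = 1, 2. Then c·m₁·m₂·∫ t²/((1 + t·m₁)(1 + t·m₂)) dH(t) = 1 + m₁·m₂·(z₁ − z₂)/(m₂ − m₁). -/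
open MeasureTheory

theorem stmt_8 (H : Measure ℝ) [IsProbabilityMeasure H] (c : ℝ) (hc : 0 < c)
    (m₁ m₂ : ℂ) (hm₁ : m₁ ≠ 0) (hm₂ : m₂ ≠ 0) (hne : m₁ ≠ m₂)
    (h1 : ∀ᵐ (t : ℝ) ∂H, 1 + (t : ℂ) * m₁ ≠ 0) (h2 : ∀ᵐ (t : ℝ) ∂H, 1 + (t : ℂ) * m₂ ≠ 0)
    (hi1 : Integrable (fun t : ℝ => (t : ℂ) / (1 + (t : ℂ) * m₁)) H)
    (hi2 : Integrable (fun t : ℝ => (t : ℂ) / (1 + (t : ℂ) * m₂)) H)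
    (hi12 : Integrable (fun t : ℝ => (t : ℂ) ^ 2 / ((1 + (t : ℂ) * m₁) * (1 + (t : ℂ) * m₂))) H)
    (z₁ z₂ : ℂ)
    (hz₁ : z₁ = -1 / m₁ + (c : ℂ) * ∫ (t : ℝ), (t : ℂ) / (1 + (t : ℂ) * m₁) ∂H)
    (hz₂ : z₂ = -1 / m₂ + (c : ℂ) * ∫ (t : ℝ), (t : ℂ) / (1 + (t : ℂ) * m₂) ∂H) :
    (c : ℂ) * m₁ * m₂ * ∫ (t : ℝ), (t : ℂ) ^ 2 / ((1 + (t : ℂ) * m₁) * (1 + (t : ℂ) * m₂)) ∂H =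
      1 + m₁ * m₂ * (z₁ - z₂) / (m₂ - m₁) := by
  have hd : m₂ - m₁ ≠ 0 := sub_ne_zero.mpr (Ne.symm hne)
  have key : (∫ (t : ℝ), (t : ℂ) / (1 + (t : ℂ) * m₁) ∂H)
      - (∫ (t : ℝ), (t : ℂ) / (1 + (t : ℂ) * m₂) ∂H)
      = (m₂ - m₁) * ∫ (t : ℝ), (t : ℂ) ^ 2 / ((1 + (t : ℂ) * m₁) * (1 + (t : ℂ) * m₂)) ∂H := by
    rw [← integral_sub hi1 hi2, ← integral_const_mul]
    apply integral_congr_ae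
    filter_upwards [h1, h2] with t ht1 ht2
    field_simp
    ring
  subst hz₁ hz₂
  rw [show (-1 / m₁ + (c : ℂ) * ∫ (t : ℝ), (t : ℂ) / (1 + (t : ℂ) * m₁) ∂H)
      - (-1 / m₂ + (c : ℂ) * ∫ (t : ℝ), (t : ℂ) / (1 + (t : ℂ) * m₂) ∂H)
      = -1 / m₁ + 1 / m₂ + (c : ℂ) * ((∫ (t : ℝ), (t : ℂ) / (1 + (t : ℂ) * m₁) ∂H)
        - ∫ (t : ℝ), (t : ℂ) / (1 + (t : ℂ) * m₂) ∂H) by ring, key]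
  field_simp
  ring
end

section
/- Let n, N ≥ 1, let s₁,…,s_N ∈ ℂⁿ, let Σ be any n×n complex matrix, let z ∈ ℂ with Im z ≠ 0, and let b ∈ ℂ be such that Σ̃(z) := z·I − b·Σ is invertible. Set S = Σ_{j=1}^N s_j s_j*, D(z) = S − z·I, D_j(z) = D(z) − s_j s_j*, and β_j(z) = (1 + s_j*·D_j^{-1}(z)·s_j)^{-1}. Then D(z) and every D_j(z) are invertible, every 1 + s_j*·D_j^{-1}(z)·s_j is nonzero, and the exact identity D^{-1}(z) = −Σ̃^{-1}(z) + Σ_{j=1}^N β_j(z)·Σ̃^{-1}(z)·s_j s_j*·D_j^{-1}(z) − b·Σ̃^{-1}(z)·Σ·D^{-1}(z) holds. -/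
open Matrix

/-- The rank-one matrix `v v*`. -/
def rankOne {n : ℕ} (v : Fin n → ℂ) : Matrix (Fin n) (Fin n) ℂ :=
  Matrix.vecMulVec v (star v)

section Aux

variable {n : ℕ}

lemma aux_vecMulVec_mulVec (u v w : Fin n → ℂ) :
    (vecMulVec u v).mulVec w = (v ⬝ᵥ w) • u := by
  ext i
  simp only [vecMulVec_apply, mulVec, dotProduct, Pi.smul_apply, smul_eq_mul,
    Finset.sum_mul, Finset.mul_sum]
  exact Finset.sum_congr rfl fun j _ => by ring

lemma aux_mul_vecMulVec (A : Matrix (Fin n) (Fin n) ℂ) (u v : Fin n → ℂ) :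
    A * vecMulVec u v = vecMulVec (A.mulVec u) v := by
  ext i j
  simp [mul_apply, vecMulVec_apply, mulVec, dotProduct, Finset.sum_mul, mul_assoc]

lemma aux_vecMulVec_mul (A : Matrix (Fin n) (Fin n) ℂ) (u v : Fin n → ℂ) :
    vecMulVec u v * A = vecMulVec u (A.vecMul v) := by
  ext i j
  simp [mul_apply, vecMulVec_apply, vecMul, dotProduct, Finset.mul_sum, mul_assoc]

lemma aux_smul_vecMulVec (c : ℂ) (u v : Fin n → ℂ) :
    vecMulVec (c • u) v = c • vecMulVec u v := by
  ext i j
  simp [vecMulVec_apply, mul_assoc]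

lemma aux_sum_mulVec {ι : Type*} (T : Finset ι) (M : ι → Matrix (Fin n) (Fin n) ℂ)
    (v : Fin n → ℂ) : (∑ i ∈ T, M i).mulVec v = ∑ i ∈ T, (M i).mulVec v := by
  classical
  induction T using Finset.induction_on with
  | empty => simp [Matrix.zero_mulVec]
  | insert _ _ h ih => simp [Finset.sum_insert h, Matrix.add_mulVec, ih]

lemma aux_dotProduct_sum {ι : Type*} (T : Finset ι) (v : Fin n → ℂ)
    (w : ι → Fin n → ℂ) : v ⬝ᵥ (∑ i ∈ T, w i) = ∑ i ∈ T, v ⬝ᵥ w i := by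
  classical
  induction T using Finset.induction_on with
  | empty => simp
  | insert _ _ h ih => simp [Finset.sum_insert h, dotProduct_add, ih]

/-- Invertibility of a PSD sum minus `z•1` for non-real `z`. -/
lemma aux_isUnit_psd_sub {ι : Type*} (T : Finset ι) (t : ι → Fin n → ℂ)
    {z : ℂ} (hz : z.im ≠ 0) :
    IsUnit ((∑ i ∈ T, rankOne (t i)) - z • (1 : Matrix (Fin n) (Fin n) ℂ)) := by
  classical
  rw [Matrix.isUnit_iff_isUnit_det, isUnit_iff_ne_zero]
  intro hdet
  obtain ⟨v, hv0, hv⟩ := (Matrix.exists_mulVec_eq_zero_iff).2 hdet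
  have hv' : (∑ i ∈ T, rankOne (t i)).mulVec v = z • v := by
    have h1 : (∑ i ∈ T, rankOne (t i)).mulVec v
        - (z • (1 : Matrix (Fin n) (Fin n) ℂ)).mulVec v = 0 := by
      rw [← Matrix.sub_mulVec]; exact hv
    have h2 : (z • (1 : Matrix (Fin n) (Fin n) ℂ)).mulVec v = z • v := by
      rw [Matrix.smul_mulVec, Matrix.one_mulVec]
    rw [h2] at h1
    linear_combination (norm := module) h1
  have key : star v ⬝ᵥ (∑ i ∈ T, rankOne (t i)).mulVec v = z * (star v ⬝ᵥ v) := by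
    rw [hv', dotProduct_smul, smul_eq_mul]
  have lhs : star v ⬝ᵥ (∑ i ∈ T, rankOne (t i)).mulVec v
      = (↑(∑ i ∈ T, Complex.normSq (star (t i) ⬝ᵥ v)) : ℂ) := by
    rw [aux_sum_mulVec, aux_dotProduct_sum]
    push_cast
    refine Finset.sum_congr rfl fun i _ => ?_
    rw [rankOne, aux_vecMulVec_mulVec, dotProduct_smul, smul_eq_mul]
    rw [star_dotProduct v (t i)]
    exact Complex.mul_conj _
  have rhs : (star v ⬝ᵥ v) = (↑(∑ i, Complex.normSq (v i)) : ℂ) := by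
    push_cast
    refine Finset.sum_congr rfl fun i _ => ?_
    simp [Complex.normSq_eq_conj_mul_self]
  rw [lhs, rhs] at key
  have hM : 0 < ∑ i, Complex.normSq (v i) := by
    obtain ⟨i0, hi0⟩ := Function.ne_iff.1 hv0
    exact Finset.sum_pos' (fun i _ => Complex.normSq_nonneg _)
      ⟨i0, Finset.mem_univ _, Complex.normSq_pos.2 hi0⟩
  have him : z.im * (∑ i, Complex.normSq (v i)) = 0 := by
    have h := congrArg Complex.im key
    simpa [Complex.mul_im] using h.symm
  rcases mul_eq_zero.1 him with h | h
  · exact hz h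
  · exact hM.ne' h

end Aux

theorem stmt_12 {n N : ℕ} (hn : 0 < n) (hN : 0 < N)
    (s : Fin N → Fin n → ℂ) (Sig : Matrix (Fin n) (Fin n) ℂ)
    (z b : ℂ) (hz : z.im ≠ 0)
    (hinv : IsUnit (z • (1 : Matrix (Fin n) (Fin n) ℂ) - b • Sig)) :
    IsUnit ((∑ j, rankOne (s j)) - z • (1 : Matrix (Fin n) (Fin n) ℂ)) ∧
    (∀ j, IsUnit ((∑ k, rankOne (s k)) - rankOne (s j) -
      z • (1 : Matrix (Fin n) (Fin n) ℂ))) ∧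
    (∀ j, 1 + star (s j) ⬝ᵥ (((∑ k, rankOne (s k)) - rankOne (s j) -
      z • (1 : Matrix (Fin n) (Fin n) ℂ))⁻¹).mulVec (s j) ≠ 0) ∧
    ((∑ j, rankOne (s j)) - z • (1 : Matrix (Fin n) (Fin n) ℂ))⁻¹ =
      -(z • (1 : Matrix (Fin n) (Fin n) ℂ) - b • Sig)⁻¹ +
      (∑ j, (1 + star (s j) ⬝ᵥ (((∑ k, rankOne (s k)) - rankOne (s j) -
            z • (1 : Matrix (Fin n) (Fin n) ℂ))⁻¹).mulVec (s j))⁻¹ •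
          ((z • (1 : Matrix (Fin n) (Fin n) ℂ) - b • Sig)⁻¹ * rankOne (s j) *
            ((∑ k, rankOne (s k)) - rankOne (s j) -
              z • (1 : Matrix (Fin n) (Fin n) ℂ))⁻¹)) -
      b • ((z • (1 : Matrix (Fin n) (Fin n) ℂ) - b • Sig)⁻¹ * Sig *
        ((∑ j, rankOne (s j)) - z • (1 : Matrix (Fin n) (Fin n) ℂ))⁻¹) := by
  classical
  set A : Matrix (Fin n) (Fin n) ℂ := ∑ j, rankOne (s j) with hA
  set D : Matrix (Fin n) (Fin n) ℂ := A - z • 1 with hD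
  set Dj : Fin N → Matrix (Fin n) (Fin n) ℂ :=
    fun j => A - rankOne (s j) - z • 1 with hDj
  set T : Matrix (Fin n) (Fin n) ℂ := z • 1 - b • Sig with hT
  -- invertibility of D
  have hDunit : IsUnit D := by
    simpa using aux_isUnit_psd_sub (Finset.univ : Finset (Fin N)) s hz
  -- invertibility of each Dj
  have hDjunit : ∀ j, IsUnit (Dj j) := by
    intro j
    have hsum : (∑ k ∈ Finset.univ.erase j, rankOne (s k)) = A - rankOne (s j) := by
      rw [hA, eq_sub_iff_add_eq]
      exact Finset.sum_erase_add _ _ (Finset.mem_univ j)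
    have := aux_isUnit_psd_sub (Finset.univ.erase j) s hz
    rwa [hsum] at this
  have hDdet : IsUnit D.det := (Matrix.isUnit_iff_isUnit_det D).1 hDunit
  have hDjdet : ∀ j, IsUnit (Dj j).det :=
    fun j => (Matrix.isUnit_iff_isUnit_det _).1 (hDjunit j)
  -- the scalars
  set c : Fin N → ℂ := fun j => star (s j) ⬝ᵥ ((Dj j)⁻¹).mulVec (s j) with hc
  -- nonvanishing of 1 + c j via the determinant lemma
  have hcne : ∀ j, 1 + c j ≠ 0 := by
    intro j
    have hfact : D = Dj j * (1 + (Dj j)⁻¹ * rankOne (s j)) := by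
      rw [Matrix.mul_add, Matrix.mul_one, ← Matrix.mul_assoc,
        Matrix.mul_nonsing_inv _ (hDjdet j), Matrix.one_mul]
      simp only [hD, hDj]
      abel
    have hdet1 : ((1 : Matrix (Fin n) (Fin n) ℂ) + (Dj j)⁻¹ * rankOne (s j)).det
        = 1 + c j := by
      rw [rankOne, aux_mul_vecMulVec, vecMulVec_eq Unit,
        Matrix.det_one_add_replicateCol_mul_replicateRow]
    intro hzero
    have : D.det = 0 := by
      rw [hfact, Matrix.det_mul, hdet1, hzero, mul_zero]
    exact (isUnit_iff_ne_zero.1 hDdet) this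
  -- key rank-one update identity
  have hkey : ∀ j, rankOne (s j) * D⁻¹ = (1 + c j)⁻¹ • (rankOne (s j) * (Dj j)⁻¹) := by
    intro j
    have hDsplit : D = Dj j + rankOne (s j) := by simp only [hD, hDj]; abel
    have h1 : rankOne (s j) * (Dj j)⁻¹ * D = (1 + c j) • rankOne (s j) := by
      rw [hDsplit, Matrix.mul_add, Matrix.mul_assoc,
        Matrix.nonsing_inv_mul _ (hDjdet j), Matrix.mul_one]
      have h2 : rankOne (s j) * (Dj j)⁻¹ * rankOne (s j) = c j • rankOne (s j) := by
        rw [rankOne, aux_vecMulVec_mul, aux_mul_vecMulVec, aux_vecMulVec_mulVec,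
          aux_smul_vecMulVec]
        congr 1
        exact (Matrix.dotProduct_mulVec _ _ _).symm
      rw [h2, add_smul, one_smul]
    have h3 : rankOne (s j) * (Dj j)⁻¹ = (1 + c j) • (rankOne (s j) * D⁻¹) := by
      calc rankOne (s j) * (Dj j)⁻¹
          = rankOne (s j) * (Dj j)⁻¹ * (D * D⁻¹) := by
            rw [Matrix.mul_nonsing_inv _ hDdet, Matrix.mul_one]
        _ = (rankOne (s j) * (Dj j)⁻¹ * D) * D⁻¹ := by
            rw [Matrix.mul_assoc (rankOne (s j) * (Dj j)⁻¹) D D⁻¹]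
        _ = ((1 + c j) • rankOne (s j)) * D⁻¹ := by rw [h1]
        _ = (1 + c j) • (rankOne (s j) * D⁻¹) := by rw [Matrix.smul_mul]
    rw [h3, smul_smul, inv_mul_cancel₀ (hcne j), one_smul]
  -- the main identity
  have hTdet : IsUnit T.det := (Matrix.isUnit_iff_isUnit_det T).1 hinv
  have hTD : T * D⁻¹ = -1 + A * D⁻¹ - b • (Sig * D⁻¹) := by
    have hTsplit : T = -D + A - b • Sig := by simp only [hT, hD]; abel
    rw [hTsplit, Matrix.sub_mul, Matrix.add_mul, Matrix.neg_mul,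
      Matrix.mul_nonsing_inv _ hDdet, Matrix.smul_mul]
  have hmain : D⁻¹ = -T⁻¹ + (∑ j, (1 + c j)⁻¹ • (T⁻¹ * rankOne (s j) * (Dj j)⁻¹))
      - b • (T⁻¹ * Sig * D⁻¹) := by
    have h4 : D⁻¹ = T⁻¹ * (T * D⁻¹) :=
      (Matrix.nonsing_inv_mul_cancel_left T D⁻¹ hTdet).symm
    rw [hTD] at h4
    conv_lhs => rw [h4]
    rw [Matrix.mul_sub, Matrix.mul_add, Matrix.mul_neg, Matrix.mul_one,
      mul_smul_comm]
    congr 2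
    · rw [hA, Finset.sum_mul, Finset.mul_sum]
      refine Finset.sum_congr rfl fun j _ => ?_
      rw [hkey j, mul_smul_comm, Matrix.mul_assoc]
    · rw [Matrix.mul_assoc]
  refine ⟨hDunit, hDjunit, hcne, ?_⟩
  exact hmain
end

section
/- Let A be an n×n Hermitian complex matrix, s ∈ ℂⁿ, z ∈ ℂ with v = Im z > 0, and let M be any n×n complex matrix. Then (with both resolvents existing since Im z > 0) | tr( ((A + s s* − z·I)^{-1} − (A − z·I)^{-1})·M ) | ≤ ‖M‖ / v. -/
open Matrix

private lemma my_trace_vecMulVec_mul {n : ℕ} (a b : Fin n → ℂ) (X : Matrix (Fin n) (Fin n) ℂ) :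
    Matrix.trace (vecMulVec a b * X) = b ⬝ᵥ (X *ᵥ a) := by
  simp only [Matrix.trace, Matrix.diag, Matrix.mul_apply, vecMulVec_apply, dotProduct,
    Matrix.mulVec, Finset.mul_sum]
  rw [Finset.sum_comm]
  exact Finset.sum_congr rfl fun j _ => Finset.sum_congr rfl fun i _ => by ring

private lemma my_vecMulVec_mulVec {n : ℕ} (a b x : Fin n → ℂ) :
    vecMulVec a b *ᵥ x = (b ⬝ᵥ x) • a := by
  ext i
  simp only [Matrix.mulVec, vecMulVec_apply, dotProduct, Pi.smul_apply, smul_eq_mul,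
    Finset.sum_mul]
  exact Finset.sum_congr rfl fun j _ => by ring

private lemma my_dot_self_real {n : ℕ} (v : Fin n → ℂ) : (star v ⬝ᵥ v).im = 0 := by
  simp [dotProduct, Complex.im_sum, Complex.mul_im, Pi.star_apply, mul_comm]

private lemma my_isUnit {n : ℕ} {H : Matrix (Fin n) (Fin n) ℂ} (hH : H.IsHermitian)
    {z : ℂ} (hz : z.im ≠ 0) : IsUnit (H - z • (1 : Matrix (Fin n) (Fin n) ℂ)) := by
  rw [← Matrix.mulVec_injective_iff_isUnit]
  have key : ∀ v : Fin n → ℂ, (H - z • 1) *ᵥ v = 0 → v = 0 := by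
    intro v hv
    rw [Matrix.sub_mulVec] at hv
    have h1 : H *ᵥ v = z • v := by
      have := sub_eq_zero.mp hv
      simpa [Matrix.smul_mulVec] using this
    have h2 : star v ⬝ᵥ (H *ᵥ v) = z * (star v ⬝ᵥ v) := by
      rw [h1]; simp [dotProduct_smul]
    have hreal : (star v ⬝ᵥ (H *ᵥ v)).im = 0 := by
      have : star (star v ⬝ᵥ (H *ᵥ v)) = star v ⬝ᵥ (H *ᵥ v) := by
        conv_rhs => rw [star_dotProduct]
        simp only [star_star, star_mulVec, hH.eq]
        rw [← Matrix.dotProduct_mulVec]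
      exact Complex.conj_eq_iff_im.mp this
    by_contra hv0
    open scoped ComplexOrder in
    have hpos : (0:ℂ) < star v ⬝ᵥ v := Matrix.dotProduct_star_self_pos_iff.mpr hv0
    rw [Complex.lt_def] at hpos
    have : (z * (star v ⬝ᵥ v)).im = 0 := h2 ▸ hreal
    rw [Complex.mul_im, my_dot_self_real, mul_zero, zero_add] at this
    rcases mul_eq_zero.mp this with h | h
    · exact hz h
    · simp only [Complex.zero_re] at hpos; linarith [hpos.1]
  intro x y hxy
  exact sub_eq_zero.mp (key (x - y) (by rw [Matrix.mulVec_sub, hxy, sub_self]))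

private lemma my_key {n : ℕ} {H : Matrix (Fin n) (Fin n) ℂ} (hH : H.IsHermitian)
    {z : ℂ} (hz : z.im ≠ 0) (s : Fin n → ℂ) :
    (star s ⬝ᵥ ((H - z • 1)⁻¹ *ᵥ s)).im
      = z.im * (star ((H - z • 1)⁻¹ *ᵥ s) ⬝ᵥ ((H - z • 1)⁻¹ *ᵥ s)).re := by
  set B := H - z • (1 : Matrix (Fin n) (Fin n) ℂ) with hBdef
  have hdB : IsUnit B.det := (Matrix.isUnit_iff_isUnit_det B).mp (my_isUnit hH hz)
  set u := B⁻¹ *ᵥ s with hu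
  have hBu : B *ᵥ u = s := by
    rw [hu, Matrix.mulVec_mulVec, Matrix.mul_nonsing_inv B hdB, Matrix.one_mulVec]
  have hBH : Bᴴ = B + (z - starRingEnd ℂ z) • 1 := by
    rw [hBdef, Matrix.conjTranspose_sub, hH.eq, Matrix.conjTranspose_smul,
      Matrix.conjTranspose_one, sub_smul]
    abel
  have hBHu : Bᴴ *ᵥ u = s + (z - starRingEnd ℂ z) • u := by
    rw [hBH, Matrix.add_mulVec, hBu, Matrix.smul_mulVec, Matrix.one_mulVec]
  have hw : star s ⬝ᵥ u
      = star (star s ⬝ᵥ u) + (z - starRingEnd ℂ z) * (star u ⬝ᵥ u) := by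
    conv_lhs => rw [← hBu, star_mulVec, ← Matrix.dotProduct_mulVec, hBHu]
    rw [dotProduct_add, dotProduct_smul, smul_eq_mul, star_dotProduct]
  have him := congrArg Complex.im hw
  simp only [Complex.star_def, Complex.add_im, Complex.conj_im, Complex.mul_im, Complex.sub_im,
    Complex.sub_re, Complex.conj_re, sub_self, zero_mul, my_dot_self_real,
    mul_zero, add_zero, zero_add] at him
  linarith

private lemma my_conj {n : ℕ} {H : Matrix (Fin n) (Fin n) ℂ} (hH : H.IsHermitian)
    (z : ℂ) (s : Fin n → ℂ) :
    star (star s ⬝ᵥ ((H - z • 1)⁻¹ *ᵥ s))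
      = star s ⬝ᵥ ((H - starRingEnd ℂ z • 1)⁻¹ *ᵥ s) := by
  have hct : ((H - z • (1 : Matrix (Fin n) (Fin n) ℂ))⁻¹)ᴴ
      = (H - starRingEnd ℂ z • 1)⁻¹ := by
    rw [Matrix.conjTranspose_nonsing_inv, Matrix.conjTranspose_sub, hH.eq,
      Matrix.conjTranspose_smul, Matrix.conjTranspose_one, Complex.star_def]
  rw [star_dotProduct, star_star, star_mulVec, ← Matrix.dotProduct_mulVec, hct]

/-- The operator (spectral) norm of a square complex matrix. -/
noncomputable def opNorm {n : ℕ} (M : Matrix (Fin n) (Fin n) ℂ) : ℝ :=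
  ‖LinearMap.toContinuousLinearMap (Matrix.toEuclideanLin M)‖

theorem stmt_14 {n : ℕ} (A : Matrix (Fin n) (Fin n) ℂ) (hA : A.IsHermitian)
    (s : Fin n → ℂ) (z : ℂ) (hz : 0 < z.im) (M : Matrix (Fin n) (Fin n) ℂ) :
    ‖Matrix.trace (((A + Matrix.vecMulVec s (star s) -
        z • (1 : Matrix (Fin n) (Fin n) ℂ))⁻¹ -
      (A - z • (1 : Matrix (Fin n) (Fin n) ℂ))⁻¹) * M)‖ ≤ opNorm M / z.im := by
  have hzne : z.im ≠ 0 := ne_of_gt hz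
  set V := Matrix.vecMulVec s (star s) with hVdef
  have hVH : V.IsHermitian := by
    ext i j
    simp [hVdef, Matrix.conjTranspose_apply, Matrix.vecMulVec_apply, mul_comm]
  have hA' : (A + V).IsHermitian := hA.add hVH
  set B := A - z • (1 : Matrix (Fin n) (Fin n) ℂ) with hB
  set B' := A + V - z • (1 : Matrix (Fin n) (Fin n) ℂ) with hB'
  have hdB : IsUnit B.det := (Matrix.isUnit_iff_isUnit_det B).mp (my_isUnit hA hzne)
  have hdB' : IsUnit B'.det := (Matrix.isUnit_iff_isUnit_det B').mp (my_isUnit hA' hzne)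
  set R := B⁻¹ with hR
  set R' := B'⁻¹ with hR'
  -- the Euclidean embedding
  set e : (Fin n → ℂ) → EuclideanSpace ℂ (Fin n) := fun a => (WithLp.equiv 2 (Fin n → ℂ)).symm a with he
  set u : Fin n → ℂ := R *ᵥ s with hu
  set u' : Fin n → ℂ := Rᴴ *ᵥ s with hu'
  set x : Fin n → ℂ := R' *ᵥ s with hx
  set w : ℂ := star s ⬝ᵥ u with hw
  -- difference formula
  have hdiff : R' - R = -(R' * V * R) := by
    have h1 : R' * B' = 1 := Matrix.nonsing_inv_mul B' hdB'
    have h2 : B * R = 1 := Matrix.mul_nonsing_inv B hdB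
    have h3 : B - B' = -V := by rw [hB, hB']; abel
    calc R' - R = R' * (B * R) - (R' * B') * R := by
          rw [h1, h2, Matrix.mul_one, Matrix.one_mul]
    _ = (R' * B) * R - (R' * B') * R := by rw [← Matrix.mul_assoc R' B R]
    _ = ((R' * B) - (R' * B')) * R := (Matrix.sub_mul _ _ _).symm
    _ = (R' * (B - B')) * R := by rw [Matrix.mul_sub R' B B']
    _ = -(R' * V * R) := by rw [h3]; simp [Matrix.mul_assoc]
  -- trace computation
  have hsvR : star s ᵥ* R = star u' := by
    rw [hu', star_mulVec, conjTranspose_conjTranspose]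
  have htr : Matrix.trace ((R' - R) * M) = -(star u' ⬝ᵥ (M *ᵥ x)) := by
    rw [hdiff]
    rw [show -(R' * V * R) * M = -(R' * (V * R * M)) by simp [Matrix.mul_assoc],
      Matrix.trace_neg, Matrix.trace_mul_comm, Matrix.mul_assoc V R M,
      Matrix.mul_assoc V (R * M) R', my_trace_vecMulVec_mul]
    rw [← Matrix.mulVec_mulVec, ← hx, ← Matrix.mulVec_mulVec,
      Matrix.dotProduct_mulVec (star s) R, hsvR]
  -- norm of dot-square
  have hnorm_sq : ∀ a : Fin n → ℂ, (star a ⬝ᵥ a).re = ‖e a‖ ^ 2 := by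
    intro a
    have h : (inner ℂ (e a) (e a) : ℂ) = star a ⬝ᵥ a :=
      (EuclideanSpace.inner_toLp_toLp a a).trans (dotProduct_comm _ _)
    rw [← h]
    exact inner_self_eq_norm_sq (𝕜 := ℂ) (e a)
  have hk1 : w.im = z.im * ‖e u‖ ^ 2 := by
    have hk := my_key hA hzne s
    rw [← hB, ← hR, ← hu, ← hw, hnorm_sq u] at hk
    exact hk
  have hctr : (A - starRingEnd ℂ z • 1)⁻¹ = Rᴴ := by
    rw [hR, Matrix.conjTranspose_nonsing_inv, hB, Matrix.conjTranspose_sub, hA.eq,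
      Matrix.conjTranspose_smul, Matrix.conjTranspose_one, Complex.star_def]
  have hk2 : w.im = z.im * ‖e u'‖ ^ 2 := by
    have hcj := my_conj hA z s
    rw [← hB, ← hR, ← hu, ← hw, hctr, ← hu'] at hcj
    have hk := my_key hA (show (starRingEnd ℂ z).im ≠ 0 by simpa using hzne) s
    rw [hctr, ← hu', ← hcj, hnorm_sq u'] at hk
    simp only [Complex.star_def, Complex.conj_im] at hk
    have : -w.im = -(z.im * ‖e u'‖ ^ 2) := by
      rw [hk]; simp [Complex.conj_im]
    linarith
  -- 1 + w ≠ 0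
  have h1w : (1 : ℂ) + w ≠ 0 := by
    by_cases him : w.im = 0
    · have hu0 : ‖e u‖ ^ 2 = 0 := by
        rcases mul_eq_zero.mp (him ▸ hk1).symm with h | h
        · exact absurd h hzne
        · exact h
      have heu : e u = 0 := by rwa [pow_eq_zero_iff two_ne_zero, norm_eq_zero] at hu0
      have hu0' : u = 0 := by
        have := congrArg (fun t => WithLp.equiv 2 (Fin n → ℂ) t) heu
        simpa [he] using this
      have hw0 : w = 0 := by rw [hw, hu0', dotProduct_zero]
      rw [hw0]; norm_num
    · intro hcon
      apply him
      have := congrArg Complex.im hcon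
      simpa using this
  -- Sherman--Morrison step
  have hBu : B *ᵥ u = s := by
    rw [hu, Matrix.mulVec_mulVec, Matrix.mul_nonsing_inv B hdB, Matrix.one_mulVec]
  have hBx : B' *ᵥ ((1 + w)⁻¹ • u) = s := by
    have hVu : V *ᵥ u = w • s := by rw [hVdef, my_vecMulVec_mulVec, ← hw]
    have hB'B : B' = B + V := by rw [hB', hB]; abel
    rw [Matrix.mulVec_smul, hB'B, Matrix.add_mulVec, hBu, hVu]
    have : s + w • s = (1 + w) • s := by rw [add_smul, one_smul]
    rw [this, smul_smul, inv_mul_cancel₀ h1w, one_smul]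
  have hxu : x = (1 + w)⁻¹ • u := by
    calc x = R' *ᵥ (B' *ᵥ ((1 + w)⁻¹ • u)) := by rw [hBx, hx]
    _ = (R' * B') *ᵥ ((1 + w)⁻¹ • u) := Matrix.mulVec_mulVec _ R' B'
    _ = (1 + w)⁻¹ • u := by rw [Matrix.nonsing_inv_mul B' hdB', Matrix.one_mulVec]
  have hex : ‖e x‖ = ‖(1 : ℂ) + w‖⁻¹ * ‖e u‖ := by
    rw [hxu]
    have h6 : e ((1 + w)⁻¹ • u) = (1 + w)⁻¹ • e u := by simp [he]
    rw [h6, norm_smul, norm_inv]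
  have hnn : (0:ℝ) < ‖(1:ℂ) + w‖ := norm_pos_iff.mpr h1w
  have heq : ‖e u'‖ = ‖e u‖ := by
    have h2 : z.im * ‖e u'‖ ^ 2 = z.im * ‖e u‖ ^ 2 := by rw [← hk1, ← hk2]
    have h3 := mul_left_cancel₀ hzne h2
    nlinarith [norm_nonneg (e u'), norm_nonneg (e u)]
  have him_le : w.im ≤ ‖(1:ℂ) + w‖ := by
    calc w.im = (1 + w).im := by simp
    _ ≤ |(1 + w).im| := le_abs_self _
    _ ≤ ‖(1:ℂ) + w‖ := Complex.abs_im_le_norm _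
    _ = ‖(1:ℂ) + w‖ := rfl
  have hprod : ‖e u'‖ * ‖e x‖ ≤ 1 / z.im := by
    rw [hex, heq]
    have h5 : ‖e u‖ ^ 2 = w.im / z.im := by rw [hk1]; field_simp
    calc ‖e u‖ * (‖(1:ℂ) + w‖⁻¹ * ‖e u‖) = ‖e u‖ ^ 2 / ‖(1:ℂ) + w‖ := by ring
    _ = (w.im / z.im) / ‖(1:ℂ) + w‖ := by rw [h5]
    _ ≤ (‖(1:ℂ) + w‖ / z.im) / ‖(1:ℂ) + w‖ := by gcongr
    _ = 1 / z.im := by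
        rw [div_div, mul_comm, ← div_div, div_self hnn.ne']
  -- final assembly
  have hop : (0:ℝ) ≤ opNorm M := norm_nonneg _
  rw [htr, norm_neg]
  have hinner : star u' ⬝ᵥ (M *ᵥ x) = (inner ℂ (e u') (e (M *ᵥ x)) : ℂ) :=
    ((EuclideanSpace.inner_toLp_toLp u' (M *ᵥ x)).trans (dotProduct_comm _ _)).symm
  rw [hinner]
  calc ‖(inner ℂ (e u') (e (M *ᵥ x)) : ℂ)‖ ≤ ‖e u'‖ * ‖e (M *ᵥ x)‖ := norm_inner_le_norm _ _
  _ ≤ ‖e u'‖ * (opNorm M * ‖e x‖) := by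
      have h7 : e (M *ᵥ x) = Matrix.toEuclideanLin M (e x) :=
        (Matrix.toEuclideanLin_apply_piLp_toLp M x).symm
      have h8 := (LinearMap.toContinuousLinearMap (Matrix.toEuclideanLin M)).le_opNorm (e x)
      rw [LinearMap.coe_toContinuousLinearMap'] at h8
      have h9 : ‖e (M *ᵥ x)‖ ≤ opNorm M * ‖e x‖ := by rw [h7]; exact h8
      exact mul_le_mul_of_nonneg_left h9 (norm_nonneg _)
  _ = opNorm M * (‖e u'‖ * ‖e x‖) := by ring
  _ ≤ opNorm M * (1 / z.im) := mul_le_mul_of_nonneg_left hprod hop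
  _ = opNorm M / z.im := by ring
end

section
/- Let A be an n×n Hermitian positive semidefinite complex matrix, s ∈ ℂⁿ, and z ∈ ℂ with v = Im z > 0. Then |1 + s*·(A − z·I)^{-1}·s| ≥ v/|z|; equivalently, | (1 + s*·(A − z·I)^{-1}·s)^{-1} | ≤ |z|/v. -/
open Matrix
open scoped ComplexOrder

theorem stmt_15 {n : ℕ} (A : Matrix (Fin n) (Fin n) ℂ) (hA : A.PosSemidef)
    (s : Fin n → ℂ) (z : ℂ) (hz : 0 < z.im) :
    z.im / ‖z‖ ≤
      ‖1 + star s ⬝ᵥ ((A - z • (1 : Matrix (Fin n) (Fin n) ℂ))⁻¹).mulVec s‖ ∧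
    ‖(1 + star s ⬝ᵥ ((A - z • (1 : Matrix (Fin n) (Fin n) ℂ))⁻¹).mulVec s)⁻¹‖ ≤
      ‖z‖ / z.im := by
  have hzabs : 0 < ‖z‖ := by
    have : z ≠ 0 := fun h => by simp [h] at hz
    simpa using norm_pos_iff.2 this
  set B := A - z • (1 : Matrix (Fin n) (Fin n) ℂ) with hB
  have hreal : ∀ v : Fin n → ℂ, star v ⬝ᵥ v = ((∑ i, Complex.normSq (v i) : ℝ) : ℂ) := by
    intro v
    simp [dotProduct, Complex.normSq_eq_conj_mul_self]
  have hdet : IsUnit B.det := by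
    rw [isUnit_iff_ne_zero]
    intro h
    obtain ⟨v, hv, hBv⟩ := Matrix.exists_mulVec_eq_zero_iff.2 h
    have hAv : A.mulVec v = z • v := by
      have h1 : A.mulVec v - z • v = 0 := by
        simpa [hB, sub_mulVec, smul_mulVec] using hBv
      exact sub_eq_zero.mp h1
    have hq : star v ⬝ᵥ A.mulVec v = z * (star v ⬝ᵥ v) := by
      rw [hAv]; simp [dotProduct_smul, smul_eq_mul]
    have hpos := hA.dotProduct_mulVec_nonneg v
    have him : (star v ⬝ᵥ A.mulVec v).im = 0 := ((Complex.le_def.mp hpos).2).symm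
    rw [hq, hreal v] at him
    have hsum : (∑ i, Complex.normSq (v i)) = 0 := by
      have : z.im * (∑ i, Complex.normSq (v i)) = 0 := by
        simpa [Complex.mul_im] using him
      exact (mul_eq_zero.mp this).resolve_left (ne_of_gt hz)
    apply hv
    funext i
    have hnn : ∀ i : Fin n, (0:ℝ) ≤ Complex.normSq (v i) := fun i => Complex.normSq_nonneg _
    have := (Finset.sum_eq_zero_iff_of_nonneg (fun i _ => hnn i)).mp hsum i (Finset.mem_univ i)
    exact Complex.normSq_eq_zero.mp this
  set u := B⁻¹.mulVec s with hu
  have hBu : B.mulVec u = s := by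
    rw [hu, mulVec_mulVec, Matrix.mul_nonsing_inv _ hdet, one_mulVec]
  set w := star s ⬝ᵥ u with hwdef
  set a := star u ⬝ᵥ A.mulVec u with ha
  set ρ : ℝ := ∑ i, Complex.normSq (u i) with hρ
  have hw : w = a - (starRingEnd ℂ z) * (ρ : ℂ) := by
    rw [hwdef]
    conv_lhs => rw [← hBu]
    rw [star_mulVec, ← dotProduct_mulVec, hB, conjTranspose_sub, conjTranspose_smul,
      conjTranspose_one, hA.1.eq, sub_mulVec, smul_mulVec, one_mulVec,
      dotProduct_sub, dotProduct_smul, smul_eq_mul, hreal u, ha]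
    rfl
  have haim : a.im = 0 := ((Complex.le_def.mp (hA.dotProduct_mulVec_nonneg u)).2).symm
  have hare : 0 ≤ a.re := (Complex.le_def.mp (hA.dotProduct_mulVec_nonneg u)).1
  have hρnn : 0 ≤ ρ := Finset.sum_nonneg fun i _ => Complex.normSq_nonneg _
  have him : (z * (1 + w)).im = z.im * (1 + a.re) := by
    rw [hw]
    simp [Complex.mul_im, Complex.add_im, Complex.add_re, Complex.sub_re, Complex.sub_im,
      Complex.mul_re, haim]
    ring
  have hlb : z.im ≤ (z * (1 + w)).im := by
    rw [him]
    nlinarith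
  have habs : z.im ≤ ‖z‖ * ‖1 + w‖ := by
    calc z.im ≤ (z * (1 + w)).im := hlb
    _ ≤ |(z * (1 + w)).im| := le_abs_self _
    _ ≤ ‖z * (1 + w)‖ := Complex.abs_im_le_norm _
    _ = ‖z‖ * ‖1 + w‖ := by rw [norm_mul]
  have h1 : z.im / ‖z‖ ≤ ‖1 + w‖ := by
    rw [div_le_iff₀ hzabs]
    linarith [habs]
  refine ⟨h1, ?_⟩
  have hne : (1 + w) ≠ 0 := by
    intro h
    rw [h, norm_zero] at h1
    have := div_pos hz hzabs
    linarith
  rw [norm_inv]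
  have h2 : ‖1 + w‖⁻¹ ≤ (z.im / ‖z‖)⁻¹ :=
    inv_anti₀ (div_pos hz hzabs) h1
  rwa [inv_div] at h2
end

section
/- For every n×n complex matrix M, Σ_{i=1}^n |Mᵢᵢ| ≤ ‖M‖ · rank(M), where Mᵢᵢ denotes the (i,i) entry of M, ‖M‖ the operator (spectral) norm, and rank(M) the rank of M. -/
open Matrix
open Finset
open scoped InnerProductSpace
set_option maxHeartbeats 1000000

theorem stmt_17 {n : ℕ} (M : Matrix (Fin n) (Fin n) ℂ) :
    ∑ i, ‖M i i‖ ≤ opNorm M * (M.rank : ℝ) := by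
  classical
  let f : EuclideanSpace ℂ (Fin n) →L[ℂ] EuclideanSpace ℂ (Fin n) :=
    LinearMap.toContinuousLinearMap (Matrix.toEuclideanLin M)
  let K : Submodule ℂ (EuclideanSpace ℂ (Fin n)) := LinearMap.range (Matrix.toEuclideanLin M)
  have hrank : M.rank = Module.finrank ℂ K :=
    Matrix.rank_eq_finrank_range_toLin M (PiLp.basisFun 2 ℂ (Fin n)) (PiLp.basisFun 2 ℂ (Fin n))
  let u := stdOrthonormalBasis ℂ K
  -- sign factors
  let θ : Fin n → ℂ := fun i => if M i i = 0 then 1 else (starRingEnd ℂ) (M i i) / ‖M i i‖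
  have hθnorm : ∀ i, ‖θ i‖ = 1 := by
    intro i
    by_cases h : M i i = 0 <;> simp [θ, h, norm_div]
  have hθmul : ∀ i, θ i * M i i = (‖M i i‖ : ℂ) := by
    intro i
    by_cases h : M i i = 0
    · simp [θ, h]
    · field_simp [θ, h]
      have hne : (‖M i i‖ : ℂ) ≠ 0 := by simpa using h
      simp only [θ, if_neg h]
      rw [div_mul_eq_mul_div, div_eq_iff hne, mul_comm _ (M i i), Complex.mul_conj, Complex.normSq_eq_norm_sq]
      push_cast
      ring
  -- the standard basis vectors
  let e : Fin n → EuclideanSpace ℂ (Fin n) := fun i => EuclideanSpace.single i 1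
  have hfe : ∀ i j, (f (e i)) j = M j i := by
    intro i j
    show (M *ᵥ (Pi.single i 1)) j = M j i
    rw [Matrix.mulVec_single]
    simp
  have hfeK : ∀ i, f (e i) ∈ K := fun i => ⟨e i, rfl⟩
  -- expansion of elements of K in the orthonormal basis
  have hexp : ∀ x : EuclideanSpace ℂ (Fin n), x ∈ K →
      x = ∑ k, ⟪(u k : EuclideanSpace ℂ (Fin n)), x⟫_ℂ • (u k : EuclideanSpace ℂ (Fin n)) := by
    intro x hx
    have h1 := u.sum_repr ⟨x, hx⟩
    have h2 : ∀ k, u.repr ⟨x, hx⟩ k = ⟪(u k : EuclideanSpace ℂ (Fin n)), x⟫_ℂ := fun k =>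
      u.repr_apply_apply ⟨x, hx⟩ k
    calc x = ((⟨x, hx⟩ : K) : EuclideanSpace ℂ (Fin n)) := rfl
    _ = ((∑ k, u.repr ⟨x, hx⟩ k • u k : K) : EuclideanSpace ℂ (Fin n)) := by rw [h1]
    _ = ∑ k, ⟪(u k : EuclideanSpace ℂ (Fin n)), x⟫_ℂ • (u k : EuclideanSpace ℂ (Fin n)) := by
        push_cast
        exact Finset.sum_congr rfl fun k _ => by rw [h2]
  -- diagonal entries
  have hdiag : ∀ i, M i i = ∑ k, ⟪(u k : EuclideanSpace ℂ (Fin n)), f (e i)⟫_ℂ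
      * (u k : EuclideanSpace ℂ (Fin n)) i := by
    intro i
    conv_lhs => rw [← hfe i i, hexp (f (e i)) (hfeK i)]
    rw [WithLp.ofLp_sum, Finset.sum_apply]
    rfl
  -- the twisted vectors
  let v : Fin (Module.finrank ℂ K) → EuclideanSpace ℂ (Fin n) :=
    fun k => (WithLp.equiv 2 _).symm (fun i => θ i * (u k : EuclideanSpace ℂ (Fin n)) i)
  have hvnorm : ∀ k, ‖v k‖ = 1 := by
    intro k
    have h1 : ‖(u k : EuclideanSpace ℂ (Fin n))‖ = 1 := by
      rw [show ‖(u k : EuclideanSpace ℂ (Fin n))‖ = ‖u k‖ from rfl]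
      exact u.orthonormal.1 k
    rw [EuclideanSpace.norm_eq] at h1 ⊢
    convert h1 using 3 with i
    simp [v, norm_mul, hθnorm i]
  -- key identity
  have hv : ∀ k, v k = ∑ i, (θ i * (u k : EuclideanSpace ℂ (Fin n)) i) • e i := by
    intro k
    ext j
    rw [show (∑ i, (θ i * (u k : EuclideanSpace ℂ (Fin n)) i) • e i) j
        = ∑ i, ((θ i * (u k : EuclideanSpace ℂ (Fin n)) i) • e i) j from by rw [WithLp.ofLp_sum]; exact Finset.sum_apply _ _ _]
    simp [v, e, EuclideanSpace.single_apply, mul_comm]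
  have hkey : (∑ i, (‖M i i‖ : ℂ)) = ∑ k, ⟪(u k : EuclideanSpace ℂ (Fin n)), f (v k)⟫_ℂ := by
    have hR : ∀ k, ⟪(u k : EuclideanSpace ℂ (Fin n)), f (v k)⟫_ℂ
        = ∑ i, (θ i * (u k : EuclideanSpace ℂ (Fin n)) i)
            * ⟪(u k : EuclideanSpace ℂ (Fin n)), f (e i)⟫_ℂ := by
      intro k
      rw [hv k, map_sum, inner_sum]
      exact Finset.sum_congr rfl fun i _ => by rw [f.map_smul, inner_smul_right]
    calc (∑ i, (‖M i i‖ : ℂ)) = ∑ i, θ i * M i i := by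
          exact Finset.sum_congr rfl fun i _ => (hθmul i).symm
    _ = ∑ i, ∑ k, (θ i * (u k : EuclideanSpace ℂ (Fin n)) i)
          * ⟪(u k : EuclideanSpace ℂ (Fin n)), f (e i)⟫_ℂ := by
          refine Finset.sum_congr rfl fun i _ => ?_
          rw [hdiag i, Finset.mul_sum]
          exact Finset.sum_congr rfl fun k _ => by ring
    _ = ∑ k, ∑ i, (θ i * (u k : EuclideanSpace ℂ (Fin n)) i)
          * ⟪(u k : EuclideanSpace ℂ (Fin n)), f (e i)⟫_ℂ := Finset.sum_comm
    _ = ∑ k, ⟪(u k : EuclideanSpace ℂ (Fin n)), f (v k)⟫_ℂ := by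
          exact Finset.sum_congr rfl fun k _ => (hR k).symm
  have hunorm : ∀ k, ‖(u k : EuclideanSpace ℂ (Fin n))‖ = 1 := fun k => u.orthonormal.1 k
  have hbound : ∀ k, ‖⟪(u k : EuclideanSpace ℂ (Fin n)), f (v k)⟫_ℂ‖ ≤ ‖f‖ := by
    intro k
    calc ‖⟪(u k : EuclideanSpace ℂ (Fin n)), f (v k)⟫_ℂ‖
        ≤ ‖(u k : EuclideanSpace ℂ (Fin n))‖ * ‖f (v k)‖ := norm_inner_le_norm _ _
    _ = ‖f (v k)‖ := by rw [hunorm k, one_mul]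
    _ ≤ ‖f‖ * ‖v k‖ := f.le_opNorm _
    _ = ‖f‖ := by rw [hvnorm k, mul_one]
  have hre : ∑ i, ‖M i i‖ = (∑ k, ⟪(u k : EuclideanSpace ℂ (Fin n)), f (v k)⟫_ℂ).re := by
    rw [← hkey, Complex.re_sum]
    exact (Finset.sum_congr rfl fun i _ => Complex.ofReal_re _).symm
  rw [hre, hrank]
  calc (∑ k, ⟪(u k : EuclideanSpace ℂ (Fin n)), f (v k)⟫_ℂ).re
      ≤ ‖∑ k, ⟪(u k : EuclideanSpace ℂ (Fin n)), f (v k)⟫_ℂ‖ := Complex.re_le_norm _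
  _ ≤ ∑ k, ‖⟪(u k : EuclideanSpace ℂ (Fin n)), f (v k)⟫_ℂ‖ := norm_sum_le _ _
  _ ≤ ∑ _k : Fin (Module.finrank ℂ K), ‖f‖ := Finset.sum_le_sum fun k _ => hbound k
  _ = (Module.finrank ℂ K : ℝ) * ‖f‖ := by
        rw [Finset.sum_const, Finset.card_univ, Fintype.card_fin, nsmul_eq_mul]
  _ = opNorm M * (Module.finrank ℂ K : ℝ) := by
        rw [mul_comm]; rfl
end

section
/- For every n×n complex matrix M and every real p ≥ 1, Σ_{i=1}^n |Mᵢᵢ|^p ≤ Σ_{i=1}^n sᵢ(M)^p, where Mᵢᵢ denotes the (i,i) entry of M and s₁(M),…,sₙ(M) are the singular values of M. -/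
open Matrix

set_option maxHeartbeats 1000000 in
-- Jensen for substochastic weights
lemma jensen_sub {ι : Type*} (s : Finset ι) (w x : ι → ℝ) (hw : ∀ i ∈ s, 0 ≤ w i)
    (hws : ∑ i ∈ s, w i ≤ 1) (hx : ∀ i ∈ s, 0 ≤ x i) {p : ℝ} (hp : 1 ≤ p) :
    (∑ i ∈ s, w i * x i) ^ p ≤ ∑ i ∈ s, w i * x i ^ p := by
  set c := ∑ i ∈ s, w i with hc
  have hc0 : 0 ≤ c := Finset.sum_nonneg hw
  rcases eq_or_lt_of_le hc0 with h0 | hpos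
  · have hz : ∀ i ∈ s, w i = 0 := by
      intro i hi
      exact (Finset.sum_eq_zero_iff_of_nonneg hw).mp h0.symm i hi
    have h1 : ∑ i ∈ s, w i * x i = 0 := Finset.sum_eq_zero fun i hi => by rw [hz i hi, zero_mul]
    have h2 : ∑ i ∈ s, w i * x i ^ p = 0 := Finset.sum_eq_zero fun i hi => by rw [hz i hi, zero_mul]
    rw [h1, h2, Real.zero_rpow (by linarith : p ≠ 0)]
  · have key := Real.rpow_arith_mean_le_arith_mean_rpow s (fun i => w i / c) x
      (fun i hi => div_nonneg (hw i hi) hc0)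
      (by rw [← Finset.sum_div, ← hc, div_self hpos.ne']) hx hp
    have hsum : ∑ i ∈ s, w i / c * x i = (∑ i ∈ s, w i * x i) / c := by
      rw [Finset.sum_div]; exact Finset.sum_congr rfl fun i _ => by ring
    have hsum2 : ∑ i ∈ s, w i / c * x i ^ p = (∑ i ∈ s, w i * x i ^ p) / c := by
      rw [Finset.sum_div]; exact Finset.sum_congr rfl fun i _ => by ring
    rw [hsum, hsum2] at key
    have hwx : 0 ≤ ∑ i ∈ s, w i * x i :=
      Finset.sum_nonneg fun i hi => mul_nonneg (hw i hi) (hx i hi)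
    have hwxp : 0 ≤ ∑ i ∈ s, w i * x i ^ p :=
      Finset.sum_nonneg fun i hi => mul_nonneg (hw i hi) (Real.rpow_nonneg (hx i hi) p)
    rw [Real.div_rpow hwx hc0] at key
    have h3 : (∑ i ∈ s, w i * x i) ^ p ≤ c ^ p * ((∑ i ∈ s, w i * x i ^ p) / c) := by
      rw [div_le_iff₀ (Real.rpow_pos_of_pos hpos p)] at key
      linarith [key]
    calc (∑ i ∈ s, w i * x i) ^ p ≤ c ^ p * ((∑ i ∈ s, w i * x i ^ p) / c) := h3
      _ = c ^ (p - 1) * (∑ i ∈ s, w i * x i ^ p) := by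
          rw [Real.rpow_sub hpos, Real.rpow_one]; ring
      _ ≤ 1 * (∑ i ∈ s, w i * x i ^ p) := by
          gcongr
          exact Real.rpow_le_one hc0 hws (by linarith)
      _ = _ := one_mul _

/-- The singular values of a square complex matrix: the square roots of the eigenvalues of
`Mᴴ * M`. -/
noncomputable def singularValues {n : ℕ} (M : Matrix (Fin n) (Fin n) ℂ) : Fin n → ℝ :=
  fun i => Real.sqrt ((Matrix.isHermitian_conjTranspose_mul_self M).eigenvalues i)

set_option maxHeartbeats 2000000 in
theorem stmt_18 {n : ℕ} (M : Matrix (Fin n) (Fin n) ℂ) (p : ℝ) (hp : 1 ≤ p) :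
    ∑ i, ‖M i i‖ ^ p ≤ ∑ i, singularValues M i ^ p := by
  simp only [singularValues]
  have hstar : ∀ z : ℂ, star z * z = (((‖z‖:ℝ) : ℂ))^2 := fun z => by
    rw [Complex.star_def, mul_comm, Complex.mul_conj, Complex.normSq_eq_norm_sq]
    push_cast; ring
  have hstar' : ∀ z : ℂ, z * star z = (((‖z‖:ℝ) : ℂ))^2 := fun z => by
    rw [mul_comm]; exact hstar z
  set hM := Matrix.isHermitian_conjTranspose_mul_self M with hMdef
  set μ : Fin n → ℝ := hM.eigenvalues with hμ
  set V : Matrix (Fin n) (Fin n) ℂ := (hM.eigenvectorUnitary : Matrix (Fin n) (Fin n) ℂ) with hV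
  have hμ0 : ∀ k, 0 ≤ μ k := fun k => Matrix.eigenvalues_conjTranspose_mul_self_nonneg M k
  have hVV : V * Vᴴ = 1 := by
    rw [← Matrix.star_eq_conjTranspose]
    exact (Matrix.mem_unitaryGroup_iff).mp hM.eigenvectorUnitary.2
  have hVV' : Vᴴ * V = 1 := by
    rw [← Matrix.star_eq_conjTranspose]
    exact (Matrix.mem_unitaryGroup_iff').mp hM.eigenvectorUnitary.2
  have hspec : Mᴴ * M = V * diagonal (RCLike.ofReal ∘ μ) * Vᴴ := by
    simpa only [Unitary.conjStarAlgAut_apply, Matrix.star_eq_conjTranspose] using hM.spectral_theorem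
  set W : Matrix (Fin n) (Fin n) ℂ := M * V with hW
  have hWW : Wᴴ * W = diagonal (fun k => (μ k : ℂ)) := by
    rw [hW, Matrix.conjTranspose_mul]
    calc Vᴴ * Mᴴ * (M * V) = Vᴴ * (Mᴴ * M) * V := by noncomm_ring
      _ = (Vᴴ * V) * diagonal (RCLike.ofReal ∘ μ) * (Vᴴ * V) := by rw [hspec]; noncomm_ring
      _ = diagonal (fun k => (μ k : ℂ)) := by rw [hVV']; simp [Function.comp]
  -- norms of columns of W
  have hWnorm : ∀ k, ∑ i, ‖W i k‖ ^ 2 = μ k := by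
    intro k
    have h := congrFun (congrFun hWW k) k
    simp only [Matrix.mul_apply, Matrix.conjTranspose_apply, Matrix.diagonal_apply_eq] at h
    have : ∑ i, ((‖W i k‖ : ℂ)) ^ 2 = (μ k : ℂ) := by
      rw [← h]
      exact Finset.sum_congr rfl fun i _ => (hstar _).symm
    exact_mod_cast this
  have hWzero : ∀ i k, μ k = 0 → W i k = 0 := by
    intro i k hk
    have h := hWnorm k
    rw [hk] at h
    have h2 : ‖W i k‖ ^ 2 = 0 := by
      have := Finset.sum_eq_zero_iff_of_nonneg (fun j _ => sq_nonneg ‖W j k‖) |>.mp h i (Finset.mem_univ i)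
      exact this
    simpa using h2
  set s : Fin n → ℝ := fun k => Real.sqrt (μ k) with hs
  have hs0 : ∀ k, 0 ≤ s k := fun k => Real.sqrt_nonneg _
  have hs2 : ∀ k, s k ^ 2 = μ k := fun k => Real.sq_sqrt (hμ0 k)
  set d : Fin n → ℂ := fun k => ((s k : ℂ))⁻¹ with hd
  set U : Matrix (Fin n) (Fin n) ℂ := W * diagonal d with hU
  set e : Fin n → ℂ := fun k => if μ k = 0 then 0 else 1 with he
  have hde : ∀ k, star (d k) * (μ k : ℂ) * d k = e k := by
    intro k
    by_cases hk : μ k = 0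
    · have : s k = 0 := by rw [hs]; simp [hk]
      simp [hd, he, hk, this]
    · have hsk : s k ≠ 0 := fun h => hk (by rw [← hs2 k, h]; ring)
      have hμk : (μ k : ℂ) = (s k : ℂ) * (s k : ℂ) := by
        rw [← Complex.ofReal_mul]
        norm_cast
        rw [← hs2 k]; ring
      have hskC : (s k : ℂ) ≠ 0 := by exact_mod_cast hsk
      simp only [hd, he, hk, if_false]
      rw [star_inv₀, Complex.star_def, Complex.conj_ofReal, hμk]
      field_simp
  have hUU : Uᴴ * U = diagonal e := by
    rw [hU, Matrix.conjTranspose_mul, Matrix.diagonal_conjTranspose]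
    calc (diagonal (star d)) * Wᴴ * (W * diagonal d)
        = diagonal (star d) * (Wᴴ * W) * diagonal d := by noncomm_ring
      _ = diagonal (star d) * diagonal (fun k => (μ k : ℂ)) * diagonal d := by rw [hWW]
      _ = diagonal e := by
          rw [Matrix.diagonal_mul_diagonal, Matrix.diagonal_mul_diagonal]
          exact congrArg diagonal (funext fun k => hde k)
  have hUzero : ∀ i k, μ k = 0 → U i k = 0 := by
    intro i k hk
    rw [hU, Matrix.mul_diagonal, hWzero i k hk, zero_mul]
  have hUe : U * diagonal e = U := by
    ext i k
    rw [Matrix.mul_diagonal]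
    by_cases hk : μ k = 0
    · rw [hUzero i k hk, zero_mul]
    · simp [he, hk]
  set P : Matrix (Fin n) (Fin n) ℂ := U * Uᴴ with hP
  have hPP : P * P = P := by
    calc U * Uᴴ * (U * Uᴴ) = U * (Uᴴ * U) * Uᴴ := by noncomm_ring
      _ = U * diagonal e * Uᴴ := by rw [hUU]
      _ = U * Uᴴ := by rw [hUe]
  have hPherm : ∀ i j, P j i = star (P i j) := by
    intro i j
    have : Pᴴ = P := by rw [hP, Matrix.conjTranspose_mul, Matrix.conjTranspose_conjTranspose]
    have h2 := congrFun (congrFun this i) j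
    rw [Matrix.conjTranspose_apply] at h2
    rw [← h2, star_star]
  have hProw : ∀ i, ∑ k, ‖U i k‖ ^ 2 ≤ 1 := by
    intro i
    set t : ℝ := ∑ k, ‖U i k‖ ^ 2 with ht
    have ht0 : 0 ≤ t := Finset.sum_nonneg fun k _ => sq_nonneg _
    have hPii : P i i = (t : ℂ) := by
      rw [hP, Matrix.mul_apply, ht]
      push_cast
      refine Finset.sum_congr rfl fun k _ => ?_
      rw [Matrix.conjTranspose_apply, hstar']
    have hsum : ∑ j, ‖P i j‖ ^ 2 = t := by
      have h := congrFun (congrFun hPP i) i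
      rw [Matrix.mul_apply] at h
      have h2 : ∑ j, ((‖P i j‖ : ℂ)) ^ 2 = (t : ℂ) := by
        rw [← hPii, ← h]
        refine Finset.sum_congr rfl fun j _ => ?_
        rw [hPherm i j, hstar']
      exact_mod_cast h2
    have hle : t ^ 2 ≤ t := by
      calc t ^ 2 = ‖P i i‖ ^ 2 := by
            rw [hPii, Complex.norm_real, Real.norm_eq_abs, abs_of_nonneg ht0]
        _ ≤ ∑ j, ‖P i j‖ ^ 2 := Finset.single_le_sum (f := fun j => ‖P i j‖ ^ 2) (fun j _ => sq_nonneg _) (Finset.mem_univ i)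
        _ = t := hsum
    nlinarith
  -- column norms of U
  have hUcol : ∀ k, ∑ i, ‖U i k‖ ^ 2 ≤ 1 := by
    intro k
    have h := congrFun (congrFun hUU k) k
    simp only [Matrix.mul_apply, Matrix.conjTranspose_apply, Matrix.diagonal_apply_eq] at h
    have h2 : ∑ i, ((‖U i k‖ : ℂ)) ^ 2 = e k := by
      rw [← h]; exact Finset.sum_congr rfl fun i _ => (hstar _).symm
    by_cases hk : μ k = 0
    · have : ∑ i, ((‖U i k‖ : ℂ)) ^ 2 = (0 : ℝ) := by rw [h2]; simp [he, hk]
      have h3 : ∑ i, ‖U i k‖ ^ 2 = (0:ℝ) := by exact_mod_cast this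
      rw [h3]; norm_num
    · have : ∑ i, ((‖U i k‖ : ℂ)) ^ 2 = ((1:ℝ) : ℂ) := by rw [h2]; simp [he, hk]
      have h3 : ∑ i, ‖U i k‖ ^ 2 = (1:ℝ) := by exact_mod_cast this
      rw [h3]
  -- rows and columns of V
  have hVrow : ∀ i, ∑ k, ‖V i k‖ ^ 2 = 1 := by
    intro i
    have h := congrFun (congrFun hVV i) i
    simp only [Matrix.mul_apply, Matrix.conjTranspose_apply, Matrix.one_apply_eq] at h
    have h2 : ∑ k, ((‖V i k‖ : ℂ)) ^ 2 = 1 := by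
      rw [← h]
      exact Finset.sum_congr rfl fun k _ => (hstar' _).symm
    exact_mod_cast h2
  have hVcol : ∀ k, ∑ i, ‖V i k‖ ^ 2 = 1 := by
    intro k
    have h := congrFun (congrFun hVV' k) k
    simp only [Matrix.mul_apply, Matrix.conjTranspose_apply, Matrix.one_apply_eq] at h
    have h2 : ∑ i, ((‖V i k‖ : ℂ)) ^ 2 = 1 := by
      rw [← h]
      exact Finset.sum_congr rfl fun i _ => (hstar _).symm
    exact_mod_cast h2
  -- ‖U i k‖ * s k = ‖W i k‖
  have hUs : ∀ i k, ‖U i k‖ * s k = ‖W i k‖ := by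
    intro i k
    by_cases hk : μ k = 0
    · have hsk : s k = 0 := by rw [hs]; simp [hk]
      rw [hsk, mul_zero, hWzero i k hk, norm_zero]
    · have hsk : s k ≠ 0 := fun h => hk (by rw [← hs2 k, h]; ring)
      have : U i k = W i k * d k := by rw [hU, Matrix.mul_diagonal]
      rw [this, norm_mul]
      have hdk : ‖d k‖ = (s k)⁻¹ := by
        rw [hd]
        simp [abs_of_nonneg (hs0 k)]
      rw [hdk]
      field_simp
  -- diagonal entries of M
  have hMdiag : ∀ i, M i i = ∑ k, W i k * star (V i k) := by
    intro i
    have hMW : M = W * Vᴴ := by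
      rw [hW, Matrix.mul_assoc, hVV, Matrix.mul_one]
    conv_lhs => rw [hMW]
    rw [Matrix.mul_apply]
    exact Finset.sum_congr rfl fun k _ => by rw [Matrix.conjTranspose_apply]
  set D : Fin n → Fin n → ℝ := fun i k => ‖U i k‖ * ‖V i k‖ with hD
  have hD0 : ∀ i k, 0 ≤ D i k := fun i k => mul_nonneg (norm_nonneg _) (norm_nonneg _)
  have hMle : ∀ i, ‖M i i‖ ≤ ∑ k, D i k * s k := by
    intro i
    calc ‖M i i‖ = ‖∑ k, W i k * star (V i k)‖ := by rw [hMdiag i]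
      _ ≤ ∑ k, ‖W i k * star (V i k)‖ := norm_sum_le _ _
      _ = ∑ k, D i k * s k := by
          refine Finset.sum_congr rfl fun k _ => ?_
          rw [norm_mul, norm_star, ← hUs i k, hD]
          ring
  have hrow : ∀ i, ∑ k, D i k ≤ 1 := by
    intro i
    have hcs := Finset.sum_mul_sq_le_sq_mul_sq Finset.univ (fun k => ‖U i k‖) (fun k => ‖V i k‖)
    have h1 : (∑ k, D i k) ^ 2 ≤ 1 := by
      calc (∑ k, D i k) ^ 2 ≤ (∑ k, ‖U i k‖ ^ 2) * ∑ k, ‖V i k‖ ^ 2 := hcs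
        _ ≤ 1 * 1 := by
            apply mul_le_mul (hProw i) (le_of_eq (hVrow i))
              (Finset.sum_nonneg fun k _ => sq_nonneg _) zero_le_one
        _ = 1 := one_mul 1
    nlinarith [Finset.sum_nonneg (fun k (_ : k ∈ Finset.univ) => hD0 i k)]
  have hcol : ∀ k, ∑ i, D i k ≤ 1 := by
    intro k
    have hcs := Finset.sum_mul_sq_le_sq_mul_sq Finset.univ (fun i => ‖U i k‖) (fun i => ‖V i k‖)
    have h1 : (∑ i, D i k) ^ 2 ≤ 1 := by
      calc (∑ i, D i k) ^ 2 ≤ (∑ i, ‖U i k‖ ^ 2) * ∑ i, ‖V i k‖ ^ 2 := hcs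
        _ ≤ 1 * 1 := by
            apply mul_le_mul (hUcol k) (le_of_eq (hVcol k))
              (Finset.sum_nonneg fun i _ => sq_nonneg _) zero_le_one
        _ = 1 := one_mul 1
    nlinarith [Finset.sum_nonneg (fun i (_ : i ∈ Finset.univ) => hD0 i k)]
  have hp0 : (0:ℝ) ≤ p := by linarith
  calc ∑ i, ‖M i i‖ ^ p ≤ ∑ i, (∑ k, D i k * s k) ^ p := by
        refine Finset.sum_le_sum fun i _ => ?_
        exact Real.rpow_le_rpow (norm_nonneg _) (hMle i) hp0
    _ ≤ ∑ i, ∑ k, D i k * s k ^ p := by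
        refine Finset.sum_le_sum fun i _ => ?_
        exact jensen_sub Finset.univ (D i) s (fun k _ => hD0 i k) (hrow i)
          (fun k _ => hs0 k) hp
    _ = ∑ k, (∑ i, D i k) * s k ^ p := by
        rw [Finset.sum_comm]
        exact Finset.sum_congr rfl fun k _ => (Finset.sum_mul _ _ _).symm
    _ ≤ ∑ k, 1 * s k ^ p := by
        refine Finset.sum_le_sum fun k _ => ?_
        exact mul_le_mul_of_nonneg_right (hcol k) (Real.rpow_nonneg (hs0 k) p)
    _ = ∑ k, s k ^ p := by simp
end
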